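/- arXiv:1807.04428 — 4 statements merged into one kernel-verified Lean document; each statement's English description precedes it below -/
import Mathlib

section
/- (Global sublinear convergence of greedy BCM.) Assume A ≠ 0, and let f* = sup_{σ ∈ M_r} f(σ). Let σ⁰ ∈ M_r and, for each k ≥ 0, let σ^{k+1} be obtained from σ^k by a greedy BCM step, i.e. σ^{k+1} = T_{i_k}(σ^k) where i_k maximizes ‖g_i(σ^k)‖ − ⟨σ_i^k, g_i(σ^k)⟩ over i. Then for every integer K ≥ 1, min_{0 ≤ k ≤ K−1} ‖grad f(σ^k)‖_F² ≤ 2 n ‖A‖₁ (f* − f(σ⁰)) / K. -/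
open scoped BigOperators RealInnerProductSpace
open Finset Matrix

noncomputable section

/-- Points on the sphere live in Euclidean space `ℝ^r`. -/
abbrev Pt (r : ℕ) := EuclideanSpace ℝ (Fin r)

/-- A configuration: `n` rows, each a vector in `ℝ^r`. -/
abbrev Conf (n r : ℕ) := Fin n → Pt r

/-- Membership in the manifold `M_r`: all rows are unit vectors. -/
def inM {n r : ℕ} (σ : Conf n r) : Prop := ∀ i, ‖σ i‖ = 1

/-- `g_i(σ) = ∑_{j ≠ i} A_{ij} σ_j`. -/
def gvec {n r : ℕ} (A : Matrix (Fin n) (Fin n) ℝ) (σ : Conf n r) (i : Fin n) : Pt r :=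
  ∑ j ∈ univ.erase i, A i j • σ j

/-- The objective `f(σ) = ⟨A, σσᵀ⟩ = ∑_{i,j} A_{ij} ⟨σ_i, σ_j⟩`. -/
def fval {n r : ℕ} (A : Matrix (Fin n) (Fin n) ℝ) (σ : Conf n r) : ℝ :=
  ∑ i, ∑ j, A i j * ⟪σ i, σ j⟫

/-- The BCM update `T_i(σ)`: replace row `i` by `g_i(σ)/‖g_i(σ)‖`
    (unchanged if `g_i(σ) = 0`). -/
def Tupd {n r : ℕ} (A : Matrix (Fin n) (Fin n) ℝ) (σ : Conf n r) (i : Fin n) : Conf n r :=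
  letI := Classical.dec (gvec A σ i = 0)
  Function.update σ i (if gvec A σ i = 0 then σ i else ‖gvec A σ i‖⁻¹ • gvec A σ i)

/-- `‖A‖₁ = max_j ∑_i |A_{ij}|`. -/
def Anorm1 {n : ℕ} (A : Matrix (Fin n) (Fin n) ℝ) : ℝ := ⨆ j, ∑ i, |A i j|

/-- `‖A‖_{1,1} = ∑_{i,j} |A_{ij}|`. -/
def Anorm11 {n : ℕ} (A : Matrix (Fin n) (Fin n) ℝ) : ℝ := ∑ i, ∑ j, |A i j|

/-- Squared Riemannian gradient norm
    `‖grad f(σ)‖_F² = 2 ∑_i (‖g_i‖² − ⟨σ_i, g_i⟩²)`. -/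
def gradNormSq {n r : ℕ} (A : Matrix (Fin n) (Fin n) ℝ) (σ : Conf n r) : ℝ :=
  2 * ∑ i, (‖gvec A σ i‖ ^ 2 - ⟪σ i, gvec A σ i⟫ ^ 2)

/-- The geodesic through `σ` in direction `u`, at time `t`:
    `σ_i(t) = σ_i cos(‖u_i‖ t) + (u_i/‖u_i‖) sin(‖u_i‖ t)` (rows with `u_i = 0` stay fixed). -/
def geo {n r : ℕ} (σ u : Conf n r) (t : ℝ) : Conf n r :=
  fun i => Real.cos (‖u i‖ * t) • σ i + (Real.sin (‖u i‖ * t) / ‖u i‖) • u i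

/-- Tangency: `u ∈ T_σ M_r` iff every row of `u` is orthogonal to the
    corresponding row of `σ`. -/
def tangent {n r : ℕ} (σ u : Conf n r) : Prop := ∀ i, ⟪u i, σ i⟫ = 0

/-- Squared Frobenius norm `‖u‖_F² = ∑_i ‖u_i‖²`. -/
def fnormSq {n r : ℕ} (u : Conf n r) : ℝ := ∑ i, ‖u i‖ ^ 2

/-- Riemannian gradient pairing `G_σ(u) = 2 ∑_i ⟨u_i, g_i(σ)⟩`. -/
def Gform {n r : ℕ} (A : Matrix (Fin n) (Fin n) ℝ) (σ u : Conf n r) : ℝ :=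
  2 * ∑ i, ⟪u i, gvec A σ i⟫

/-- Riemannian Hessian quadratic form
    `H_σ(u) = 2 ∑_i (⟨u_i, v_i⟩ − ‖u_i‖² ⟨σ_i, g_i(σ)⟩)` with `v_i = ∑_{j≠i} A_{ij} u_j`. -/
def Hform {n r : ℕ} (A : Matrix (Fin n) (Fin n) ℝ) (σ u : Conf n r) : ℝ :=
  2 * ∑ i, (⟪u i, gvec A u i⟫ - ‖u i‖ ^ 2 * ⟪σ i, gvec A σ i⟫)

/-- Stationary point: `g_i(σ) ≠ 0` and `σ_i = g_i(σ)/‖g_i(σ)‖` for all `i`. -/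
def stationary {n r : ℕ} (A : Matrix (Fin n) (Fin n) ℝ) (σ : Conf n r) : Prop :=
  ∀ i, gvec A σ i ≠ 0 ∧ σ i = ‖gvec A σ i‖⁻¹ • gvec A σ i

/-- `w ∈ V_σ = {σB : Bᵀ = −B}` (rows of `σB` given by `(σB)_{ik} = ∑_l σ_{il} B_{lk}`). -/
def inV {n r : ℕ} (σ w : Conf n r) : Prop :=
  ∃ B : Matrix (Fin r) (Fin r) ℝ, Bᵀ = -B ∧ ∀ i k, w i k = ∑ l, σ i l * B l k

/-- Frobenius-orthogonality of `u` to the subspace `V_σ`. -/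
def perpV {n r : ℕ} (σ u : Conf n r) : Prop :=
  ∀ w : Conf n r, inV σ w → ∑ i, ⟪u i, w i⟫ = 0

/-- `f` satisfies quadratic decay at `σ` with constant `μ`:
    `H_σ(u) ≤ −μ ‖u‖_F²` for all tangent `u` Frobenius-orthogonal to `V_σ`. -/
def quadDecay {n r : ℕ} (A : Matrix (Fin n) (Fin n) ℝ) (σ : Conf n r) (μ : ℝ) : Prop :=
  ∀ u : Conf n r, tangent σ u → perpV σ u → Hform A σ u ≤ -μ * fnormSq u

/-- Geodesic distance `dist(σ, σ') = (∑_i arccos⟨σ_i, σ'_i⟩²)^{1/2}`. -/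
def gdist {n r : ℕ} (σ σ' : Conf n r) : ℝ :=
  Real.sqrt (∑ i, Real.arccos ⟪σ i, σ' i⟫ ^ 2)

/-- Right-multiplication of a configuration by a matrix `Q ∈ ℝ^{r×r}` (rowwise). -/
def rowMulQ {n r : ℕ} (σ : Conf n r) (Q : Matrix (Fin r) (Fin r) ℝ) : Conf n r :=
  fun i => (EuclideanSpace.equiv (Fin r) ℝ).symm (fun k => ∑ l, σ i l * Q l k)

/-- Distance to the equivalence class `[σ'] = {σ'Q : Q ∈ O(r)}`. -/
def distClass {n r : ℕ} (σ σ' : Conf n r) : ℝ :=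
  ⨅ Q : {Q : Matrix (Fin r) (Fin r) ℝ // Qᵀ * Q = 1}, gdist σ (rowMulQ σ' Q.1)

/-- `f* = sup_{σ ∈ M_r} f(σ)`. -/
def fstar {n r : ℕ} (A : Matrix (Fin n) (Fin n) ℝ) : ℝ :=
  sSup (fval A '' {σ : Conf n r | inM σ})

/-- The optimal value of the SDP with unit-diagonal constraints. -/
def SDPval {n : ℕ} (A : Matrix (Fin n) (Fin n) ℝ) : ℝ :=
  sSup {y | ∃ X : Matrix (Fin n) (Fin n) ℝ, X.PosSemidef ∧ (∀ i, X i i = 1) ∧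
    y = ∑ i, ∑ j, A i j * X i j}

/-- BCM iterates along a sequence of coordinates `ω`. -/
def iterSeq {n r : ℕ} (A : Matrix (Fin n) (Fin n) ℝ) (σ0 : Conf n r) (ω : ℕ → Fin n) :
    ℕ → Conf n r
  | 0 => σ0
  | k + 1 => Tupd A (iterSeq A σ0 ω k) (ω k)

/-- The set of rows where `u` is nonzero. -/
def suppu {n r : ℕ} (u : Conf n r) : Finset (Fin n) :=
  letI := Classical.decPred (fun i : Fin n => u i ≠ 0)
  Finset.univ.filter (fun i : Fin n => u i ≠ 0)

section Aux
variable {n r : ℕ}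

lemma inner_gvec (A : Matrix (Fin n) (Fin n) ℝ) (σ : Conf n r) (x : Pt r) (i : Fin n) :
    ⟪x, gvec A σ i⟫ = ∑ j ∈ univ.erase i, A i j * ⟪x, σ j⟫ := by
  unfold gvec
  rw [inner_sum]
  exact Finset.sum_congr rfl fun j _ => real_inner_smul_right x (σ j) (A i j)

lemma fval_split (A : Matrix (Fin n) (Fin n) ℝ) (hA : A.IsSymm) (hdiag : ∀ i, A i i = 0)
    (σ : Conf n r) (i : Fin n) :
    fval A σ = (∑ j ∈ univ.erase i, ∑ k ∈ univ.erase i, A j k * ⟪σ j, σ k⟫)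
      + 2 * ⟪σ i, gvec A σ i⟫ := by
  have hsym : ∀ j k, A j k = A k j := fun j k => hA.apply k j
  have h1 : fval A σ = (∑ j ∈ univ.erase i, ∑ k, A j k * ⟪σ j, σ k⟫)
      + ∑ k, A i k * ⟪σ i, σ k⟫ := (Finset.sum_erase_add univ _ (mem_univ i)).symm
  have h2 : ∀ j : Fin n, (∑ k, A j k * ⟪σ j, σ k⟫)
      = (∑ k ∈ univ.erase i, A j k * ⟪σ j, σ k⟫) + A j i * ⟪σ j, σ i⟫ :=
    fun j => (Finset.sum_erase_add univ _ (mem_univ i)).symm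
  have h3 : ∑ j ∈ univ.erase i, A j i * ⟪σ j, σ i⟫ = ⟪σ i, gvec A σ i⟫ := by
    rw [inner_gvec]
    refine Finset.sum_congr rfl fun j hj => ?_
    rw [hsym j i, real_inner_comm (σ j) (σ i)]
  rw [h1, h2 i, hdiag, Finset.sum_congr rfl (fun j _ => h2 j), Finset.sum_add_distrib, h3,
    inner_gvec]
  ring

lemma Tupd_apply_ne (A : Matrix (Fin n) (Fin n) ℝ) (σ : Conf n r) (i j : Fin n) (h : j ≠ i) :
    Tupd A σ i j = σ j := by
  unfold Tupd
  exact Function.update_of_ne h _ _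

lemma gvec_Tupd (A : Matrix (Fin n) (Fin n) ℝ) (σ : Conf n r) (i : Fin n) :
    gvec A (Tupd A σ i) i = gvec A σ i := by
  unfold gvec
  refine Finset.sum_congr rfl fun j hj => ?_
  rw [Tupd_apply_ne A σ i j (Finset.ne_of_mem_erase hj)]

lemma inner_Tupd_self (A : Matrix (Fin n) (Fin n) ℝ) (σ : Conf n r) (i : Fin n) :
    ⟪Tupd A σ i i, gvec A σ i⟫ = ‖gvec A σ i‖ := by
  unfold Tupd
  rw [Function.update_self]
  by_cases h : gvec A σ i = 0
  · simp [h]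
  · rw [if_neg h, real_inner_smul_left, real_inner_self_eq_norm_sq, sq, ← mul_assoc,
      inv_mul_cancel₀ (norm_ne_zero_iff.mpr h), one_mul]

lemma inM_Tupd (A : Matrix (Fin n) (Fin n) ℝ) (σ : Conf n r) (i : Fin n) (hσ : inM σ) :
    inM (Tupd A σ i) := by
  intro j
  by_cases hj : j = i
  · subst hj
    unfold Tupd
    rw [Function.update_self]
    by_cases h : gvec A σ j = 0
    · simp [h, hσ j]
    · rw [if_neg h, norm_smul, norm_inv, norm_norm, inv_mul_cancel₀ (norm_ne_zero_iff.mpr h)]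
  · rw [Tupd_apply_ne A σ i j hj]; exact hσ j

lemma fval_Tupd (A : Matrix (Fin n) (Fin n) ℝ) (hA : A.IsSymm) (hdiag : ∀ i, A i i = 0)
    (σ : Conf n r) (i : Fin n) :
    fval A (Tupd A σ i) = fval A σ + 2 * (‖gvec A σ i‖ - ⟪σ i, gvec A σ i⟫) := by
  have e1 := fval_split A hA hdiag σ i
  have e2 := fval_split A hA hdiag (Tupd A σ i) i
  have e3 : ∑ j ∈ univ.erase i, ∑ k ∈ univ.erase i, A j k * ⟪Tupd A σ i j, Tupd A σ i k⟫
      = ∑ j ∈ univ.erase i, ∑ k ∈ univ.erase i, A j k * ⟪σ j, σ k⟫ := by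
    refine Finset.sum_congr rfl fun j hj => Finset.sum_congr rfl fun k hk => ?_
    rw [Tupd_apply_ne A σ i j (Finset.ne_of_mem_erase hj),
      Tupd_apply_ne A σ i k (Finset.ne_of_mem_erase hk)]
  rw [e2, e3, gvec_Tupd, inner_Tupd_self, e1]
  ring

lemma gvec_norm_le (A : Matrix (Fin n) (Fin n) ℝ) (σ : Conf n r) (hσ : inM σ) (i : Fin n) :
    ‖gvec A σ i‖ ≤ ∑ j, |A i j| := by
  calc ‖gvec A σ i‖ ≤ ∑ j ∈ univ.erase i, ‖A i j • σ j‖ := norm_sum_le _ _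
    _ = ∑ j ∈ univ.erase i, |A i j| := by
        refine Finset.sum_congr rfl fun j _ => ?_
        rw [norm_smul, hσ j, Real.norm_eq_abs, mul_one]
    _ ≤ ∑ j, |A i j| := Finset.sum_le_sum_of_subset_of_nonneg (Finset.erase_subset _ _)
        (fun j _ _ => abs_nonneg _)

lemma row_le_Anorm1 (A : Matrix (Fin n) (Fin n) ℝ) (hA : A.IsSymm) (i : Fin n) :
    ∑ j, |A i j| ≤ Anorm1 A := by
  have : ∑ j, |A i j| = ∑ j, |A j i| := by
    refine Finset.sum_congr rfl fun j _ => ?_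
    rw [← hA.apply i j]
  rw [this, Anorm1]
  exact le_ciSup (f := fun j => ∑ i', |A i' j|) (Set.Finite.bddAbove (Set.finite_range _)) i

lemma Anorm1_nonneg (A : Matrix (Fin n) (Fin n) ℝ) (hn : 0 < n) : 0 ≤ Anorm1 A := by
  have h0 : (0:ℝ) ≤ ∑ i, |A i ⟨0, hn⟩| := Finset.sum_nonneg fun _ _ => abs_nonneg _
  rw [Anorm1]
  exact h0.trans (le_ciSup (f := fun j => ∑ i', |A i' j|)
    (Set.Finite.bddAbove (Set.finite_range _)) _)

lemma fval_le_Anorm11 (A : Matrix (Fin n) (Fin n) ℝ) (σ : Conf n r) (hσ : inM σ) :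
    fval A σ ≤ Anorm11 A := by
  refine Finset.sum_le_sum fun i _ => Finset.sum_le_sum fun j _ => ?_
  have h1 : |⟪σ i, σ j⟫| ≤ 1 := by
    have := abs_real_inner_le_norm (σ i) (σ j)
    rwa [hσ i, hσ j, one_mul] at this
  calc A i j * ⟪σ i, σ j⟫ ≤ |A i j * ⟪σ i, σ j⟫| := le_abs_self _
    _ = |A i j| * |⟪σ i, σ j⟫| := abs_mul _ _
    _ ≤ |A i j| * 1 := mul_le_mul_of_nonneg_left h1 (abs_nonneg _)
    _ = |A i j| := mul_one _

lemma fval_le_fstar (A : Matrix (Fin n) (Fin n) ℝ) (σ : Conf n r) (hσ : inM σ) :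
    fval A σ ≤ fstar (r := r) A := by
  apply le_csSup
  · refine ⟨Anorm11 A, ?_⟩
    rintro y ⟨τ, hτ, rfl⟩
    exact fval_le_Anorm11 A τ hτ
  · exact ⟨σ, hσ, rfl⟩

lemma inner_le_norm_g (A : Matrix (Fin n) (Fin n) ℝ) (σ : Conf n r) (hσ : inM σ) (i : Fin n) :
    |⟪σ i, gvec A σ i⟫| ≤ ‖gvec A σ i‖ := by
  have := abs_real_inner_le_norm (σ i) (gvec A σ i)
  rwa [hσ i, one_mul] at this

lemma gradNormSq_le (A : Matrix (Fin n) (Fin n) ℝ) (hA : A.IsSymm) (σ : Conf n r)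
    (hσ : inM σ) :
    gradNormSq A σ ≤ ∑ i, 4 * Anorm1 A * (‖gvec A σ i‖ - ⟪σ i, gvec A σ i⟫) := by
  unfold gradNormSq
  have key : ∀ i, ‖gvec A σ i‖ ^ 2 - ⟪σ i, gvec A σ i⟫ ^ 2
      ≤ 2 * Anorm1 A * (‖gvec A σ i‖ - ⟪σ i, gvec A σ i⟫) := by
    intro i
    have h1 := abs_le.mp (inner_le_norm_g A σ hσ i)
    have h2 := (gvec_norm_le A σ hσ i).trans (row_le_Anorm1 A hA i)
    nlinarith [h1.1, h1.2, h2]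
  have hsum := Finset.sum_le_sum (s := univ) (fun i _ => key i)
  calc 2 * ∑ i, (‖gvec A σ i‖ ^ 2 - ⟪σ i, gvec A σ i⟫ ^ 2)
      ≤ 2 * ∑ i, 2 * Anorm1 A * (‖gvec A σ i‖ - ⟪σ i, gvec A σ i⟫) := by linarith
    _ = ∑ i, 4 * Anorm1 A * (‖gvec A σ i‖ - ⟪σ i, gvec A σ i⟫) := by
        rw [Finset.mul_sum]
        exact Finset.sum_congr rfl fun i _ => by ring

end Aux
/-- global sublinear convergence of greedy BCM. -/
theorem greedy_bcm_sublinear {n r : ℕ} (hn : 0 < n) (hr : 0 < r)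
    (A : Matrix (Fin n) (Fin n) ℝ) (hA : A.IsSymm) (hdiag : ∀ i, A i i = 0) (hA0 : A ≠ 0)
    (σseq : ℕ → Conf n r) (hσ0 : inM (σseq 0))
    (hstep : ∀ k : ℕ, ∃ i : Fin n,
      (∀ j, ‖gvec A (σseq k) j‖ - ⟪σseq k j, gvec A (σseq k) j⟫ ≤
        ‖gvec A (σseq k) i‖ - ⟪σseq k i, gvec A (σseq k) i⟫) ∧
      σseq (k + 1) = Tupd A (σseq k) i)
    (K : ℕ) (hK : 1 ≤ K) :
    ∃ k < K, gradNormSq A (σseq k) ≤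
      2 * n * Anorm1 A * (fstar (r := r) A - fval A (σseq 0)) / K := by
  have hN1 : 0 ≤ Anorm1 A := Anorm1_nonneg A hn
  have hM : ∀ k, inM (σseq k) := by
    intro k
    induction k with
    | zero => exact hσ0
    | succ k ih =>
      obtain ⟨i, _, hTi⟩ := hstep k
      rw [hTi]; exact inM_Tupd A _ i ih
  have himp : ∀ k, gradNormSq A (σseq k) ≤
      2 * n * Anorm1 A * (fval A (σseq (k + 1)) - fval A (σseq k)) := by
    intro k
    obtain ⟨i, hgr, hTi⟩ := hstep k
    have h1 : gradNormSq A (σseq k) ≤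
        ∑ j, 4 * Anorm1 A * (‖gvec A (σseq k) j‖ - ⟪σseq k j, gvec A (σseq k) j⟫) :=
      gradNormSq_le A hA _ (hM k)
    have h2 : ∑ j : Fin n, 4 * Anorm1 A *
          (‖gvec A (σseq k) j‖ - ⟪σseq k j, gvec A (σseq k) j⟫)
        ≤ (n : ℝ) * (4 * Anorm1 A *
          (‖gvec A (σseq k) i‖ - ⟪σseq k i, gvec A (σseq k) i⟫)) := by
      have := Finset.sum_le_card_nsmul Finset.univ
        (fun j => 4 * Anorm1 A * (‖gvec A (σseq k) j‖ - ⟪σseq k j, gvec A (σseq k) j⟫))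
        (4 * Anorm1 A * (‖gvec A (σseq k) i‖ - ⟪σseq k i, gvec A (σseq k) i⟫))
        (fun j _ => mul_le_mul_of_nonneg_left (hgr j) (by linarith))
      simpa [Finset.card_univ, nsmul_eq_mul] using this
    have h3 : fval A (σseq (k + 1)) - fval A (σseq k)
        = 2 * (‖gvec A (σseq k) i‖ - ⟪σseq k i, gvec A (σseq k) i⟫) := by
      rw [hTi, fval_Tupd A hA hdiag]; ring
    rw [h3]
    calc gradNormSq A (σseq k)
        ≤ (n : ℝ) * (4 * Anorm1 A *
          (‖gvec A (σseq k) i‖ - ⟪σseq k i, gvec A (σseq k) i⟫)) := h1.trans h2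
      _ = 2 * n * Anorm1 A *
          (2 * (‖gvec A (σseq k) i‖ - ⟪σseq k i, gvec A (σseq k) i⟫)) := by ring
  have htel : ∑ k ∈ Finset.range K, (fval A (σseq (k + 1)) - fval A (σseq k))
      = fval A (σseq K) - fval A (σseq 0) :=
    Finset.sum_range_sub (fun k => fval A (σseq k)) K
  have hC : (0:ℝ) ≤ 2 * n * Anorm1 A := by positivity
  have hub : ∑ k ∈ Finset.range K, gradNormSq A (σseq k)
      ≤ 2 * n * Anorm1 A * (fstar (r := r) A - fval A (σseq 0)) := by
    calc ∑ k ∈ Finset.range K, gradNormSq A (σseq k)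
        ≤ ∑ k ∈ Finset.range K,
            2 * n * Anorm1 A * (fval A (σseq (k + 1)) - fval A (σseq k)) :=
          Finset.sum_le_sum fun k _ => himp k
      _ = 2 * n * Anorm1 A * (fval A (σseq K) - fval A (σseq 0)) := by
          rw [← Finset.mul_sum, htel]
      _ ≤ 2 * n * Anorm1 A * (fstar (r := r) A - fval A (σseq 0)) := by
          have := fval_le_fstar A (σseq K) (hM K)
          exact mul_le_mul_of_nonneg_left (by linarith) hC
  by_contra hcon
  push_neg at hcon
  have hKne : (K : ℝ) ≠ 0 := Nat.cast_ne_zero.mpr (by omega)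
  have hlt : (K : ℝ) * (2 * n * Anorm1 A * (fstar (r := r) A - fval A (σseq 0)) / K)
      < ∑ k ∈ Finset.range K, gradNormSq A (σseq k) := by
    have h := Finset.sum_lt_sum_of_nonempty (Finset.nonempty_range_iff.mpr (by omega))
      (f := fun _ : ℕ => 2 * n * Anorm1 A * (fstar (r := r) A - fval A (σseq 0)) / K)
      (fun k hk => hcon k (Finset.mem_range.mp hk))
    simpa [Finset.sum_const, Finset.card_range, nsmul_eq_mul] using h
  rw [mul_comm, div_mul_cancel₀ _ hKne] at hlt
  linarith
end
end

section
/- (Global sublinear convergence of BCM with uniform sampling, expectation over coordinate sequences.) Assume A ≠ 0 and let f* = sup_{σ ∈ M_r} f(σ). Fix σ⁰ ∈ M_r and an integer K ≥ 1. For each sequence of indices ω = (i_0,…,i_{K−1}) ∈ {1,…,n}^K define iterates σ^0(ω) = σ⁰ and σ^{k+1}(ω) = T_{i_k}(σ^k(ω)) for 0 ≤ k < K. Then min_{0 ≤ k ≤ K−1} [ n^{−K} Σ_{ω ∈ {1,…,n}^K} ‖grad f(σ^k(ω))‖_F² ] ≤ 2 n ‖A‖₁ (f* − f(σ⁰)) /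 K. -/
open scoped BigOperators RealInnerProductSpace
open Finset Matrix

noncomputable section

namespace BCMaux

variable {n r : ℕ}

lemma gvec_update (A : Matrix (Fin n) (Fin n) ℝ) (σ : Conf n r) (i : Fin n) (x : Pt r) :
    gvec A (Function.update σ i x) i = gvec A σ i := by
  unfold gvec
  refine Finset.sum_congr rfl fun j hj => ?_
  rw [Function.update_of_ne (Finset.ne_of_mem_erase hj)]

lemma inner_gvec (A : Matrix (Fin n) (Fin n) ℝ) (σ : Conf n r) (i : Fin n) (x : Pt r) :
    ⟪x, gvec A σ i⟫ = ∑ q ∈ univ.erase i, A i q * ⟪x, σ q⟫ := by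
  unfold gvec
  rw [inner_sum]
  exact Finset.sum_congr rfl fun q _ => real_inner_smul_right _ _ _

lemma fval_split (A : Matrix (Fin n) (Fin n) ℝ) (hA : A.IsSymm) (hdiag : ∀ i, A i i = 0)
    (σ : Conf n r) (i : Fin n) :
    fval A σ = (∑ p ∈ univ.erase i, ∑ q ∈ univ.erase i, A p q * ⟪σ p, σ q⟫)
      + 2 * ⟪σ i, gvec A σ i⟫ := by
  have hrow : ∀ p : Fin n, (∑ q, A p q * ⟪σ p, σ q⟫)
      = (∑ q ∈ univ.erase i, A p q * ⟪σ p, σ q⟫) + A p i * ⟪σ p, σ i⟫ :=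
    fun p => (Finset.sum_erase_add univ _ (mem_univ i)).symm
  unfold fval
  rw [Finset.sum_congr rfl fun p _ => hrow p, Finset.sum_add_distrib]
  rw [← Finset.sum_erase_add univ _ (mem_univ i), ← Finset.sum_erase_add univ
    (fun p => A p i * ⟪σ p, σ i⟫) (mem_univ i)]
  have h1 : ∑ q ∈ univ.erase i, A i q * ⟪σ i, σ q⟫ = ⟪σ i, gvec A σ i⟫ :=
    (inner_gvec A σ i (σ i)).symm
  have h2 : ∑ p ∈ univ.erase i, A p i * ⟪σ p, σ i⟫ = ⟪σ i, gvec A σ i⟫ := by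
    rw [inner_gvec]
    refine Finset.sum_congr rfl fun p _ => ?_
    rw [hA.apply p i, real_inner_comm]
  rw [h1, h2, hdiag i]
  ring

lemma fval_update (A : Matrix (Fin n) (Fin n) ℝ) (hA : A.IsSymm) (hdiag : ∀ i, A i i = 0)
    (σ : Conf n r) (i : Fin n) (x : Pt r) :
    fval A (Function.update σ i x)
      = fval A σ + 2 * (⟪x, gvec A σ i⟫ - ⟪σ i, gvec A σ i⟫) := by
  rw [fval_split A hA hdiag (Function.update σ i x) i, fval_split A hA hdiag σ i]
  have hoff : ∀ p ∈ univ.erase i, ∀ q ∈ univ.erase i,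
      A p q * ⟪Function.update σ i x p, Function.update σ i x q⟫ = A p q * ⟪σ p, σ q⟫ := by
    intro p hp q hq
    rw [Function.update_of_ne (Finset.ne_of_mem_erase hp),
      Function.update_of_ne (Finset.ne_of_mem_erase hq)]
  rw [Finset.sum_congr rfl fun p hp => Finset.sum_congr rfl (hoff p hp),
    gvec_update, Function.update_self]
  ring

lemma fval_Tupd (A : Matrix (Fin n) (Fin n) ℝ) (hA : A.IsSymm) (hdiag : ∀ i, A i i = 0)
    (σ : Conf n r) (i : Fin n) :
    fval A (Tupd A σ i)
      = fval A σ + 2 * (‖gvec A σ i‖ - ⟪σ i, gvec A σ i⟫) := by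
  unfold Tupd
  split_ifs with h
  · rw [fval_update A hA hdiag, h]
    simp
  · rw [fval_update A hA hdiag]
    rw [real_inner_smul_left, real_inner_self_eq_norm_sq]
    have hne : ‖gvec A σ i‖ ≠ 0 := norm_ne_zero_iff.mpr h
    field_simp

lemma inM_Tupd (A : Matrix (Fin n) (Fin n) ℝ) (σ : Conf n r) (hσ : inM σ) (i : Fin n) :
    inM (Tupd A σ i) := by
  intro j
  unfold Tupd
  rcases eq_or_ne j i with rfl | hj
  · rw [Function.update_self]
    split_ifs with h
    · exact hσ j
    · rw [norm_smul, norm_inv, norm_norm]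
      exact inv_mul_cancel₀ (norm_ne_zero_iff.mpr h)
  · rw [Function.update_of_ne hj]; exact hσ j

lemma inM_iterSeq (A : Matrix (Fin n) (Fin n) ℝ) (σ0 : Conf n r) (hσ0 : inM σ0)
    (ω : ℕ → Fin n) (k : ℕ) : inM (iterSeq A σ0 ω k) := by
  induction k with
  | zero => exact hσ0
  | succ k ih => exact inM_Tupd A _ ih (ω k)

lemma iterSeq_congr (A : Matrix (Fin n) (Fin n) ℝ) (σ0 : Conf n r) (ω1 ω2 : ℕ → Fin n)
    (k : ℕ) (h : ∀ j < k, ω1 j = ω2 j) : iterSeq A σ0 ω1 k = iterSeq A σ0 ω2 k := by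
  induction k with
  | zero => rfl
  | succ k ih =>
      show Tupd A (iterSeq A σ0 ω1 k) (ω1 k) = Tupd A (iterSeq A σ0 ω2 k) (ω2 k)
      rw [ih (fun j hj => h j (Nat.lt_succ_of_lt hj)), h k (Nat.lt_succ_self k)]

lemma Anorm1_nonneg (hn : 0 < n) (A : Matrix (Fin n) (Fin n) ℝ) : 0 ≤ Anorm1 A := by
  haveI : Nonempty (Fin n) := ⟨⟨0, hn⟩⟩
  unfold Anorm1
  exact le_trans (Finset.sum_nonneg fun i _ => abs_nonneg (A i ⟨0, hn⟩))
    (le_ciSup (f := fun j : Fin n => ∑ i, |A i j|) (Finite.bddAbove_range _) (⟨0, hn⟩ : Fin n))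

lemma gvec_norm_le (hn : 0 < n) (A : Matrix (Fin n) (Fin n) ℝ) (hA : A.IsSymm)
    (σ : Conf n r) (hσ : inM σ) (i : Fin n) : ‖gvec A σ i‖ ≤ Anorm1 A := by
  haveI : Nonempty (Fin n) := ⟨⟨0, hn⟩⟩
  have h1 : ‖gvec A σ i‖ ≤ ∑ j ∈ univ.erase i, |A i j| := by
    refine le_trans (norm_sum_le _ _) (le_of_eq ?_)
    refine Finset.sum_congr rfl fun j _ => ?_
    rw [norm_smul, hσ j, Real.norm_eq_abs, mul_one]
  have h2 : (∑ j ∈ univ.erase i, |A i j|) ≤ ∑ j, |A i j| :=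
    Finset.sum_le_sum_of_subset_of_nonneg (Finset.erase_subset i univ)
      (fun j _ _ => abs_nonneg _)
  have h3 : (∑ j, |A i j|) = ∑ j, |A j i| :=
    Finset.sum_congr rfl fun j _ => by rw [hA.apply i j]
  refine le_trans h1 (le_trans h2 (le_trans (le_of_eq h3) ?_))
  exact le_ciSup (f := fun j : Fin n => ∑ i, |A i j|) (Finite.bddAbove_range _) i

lemma gradNormSq_le (hn : 0 < n) (A : Matrix (Fin n) (Fin n) ℝ) (hA : A.IsSymm)
    (hdiag : ∀ i, A i i = 0) (σ : Conf n r) (hσ : inM σ) :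
    gradNormSq A σ ≤ 2 * Anorm1 A * ∑ i, (fval A (Tupd A σ i) - fval A σ) := by
  unfold gradNormSq
  have key : ∀ i : Fin n, ‖gvec A σ i‖ ^ 2 - ⟪σ i, gvec A σ i⟫ ^ 2
      ≤ 2 * Anorm1 A * (‖gvec A σ i‖ - ⟪σ i, gvec A σ i⟫) := by
    intro i
    have hcs : ⟪σ i, gvec A σ i⟫ ≤ ‖gvec A σ i‖ := by
      calc ⟪σ i, gvec A σ i⟫ ≤ ‖σ i‖ * ‖gvec A σ i‖ := real_inner_le_norm _ _
        _ = ‖gvec A σ i‖ := by rw [hσ i, one_mul]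
    have hcs' : -‖gvec A σ i‖ ≤ ⟪σ i, gvec A σ i⟫ := by
      have := abs_real_inner_le_norm (σ i) (gvec A σ i)
      rw [hσ i, one_mul] at this
      linarith [neg_abs_le (⟪σ i, gvec A σ i⟫)]
    have hb : ‖gvec A σ i‖ ≤ Anorm1 A := gvec_norm_le hn A hA σ hσ i
    have hfac : ‖gvec A σ i‖ ^ 2 - ⟪σ i, gvec A σ i⟫ ^ 2
        = (‖gvec A σ i‖ - ⟪σ i, gvec A σ i⟫) * (‖gvec A σ i‖ + ⟪σ i, gvec A σ i⟫) := by ring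
    rw [hfac]
    have h1 : 0 ≤ ‖gvec A σ i‖ - ⟪σ i, gvec A σ i⟫ := by linarith
    have h2 : ‖gvec A σ i‖ + ⟪σ i, gvec A σ i⟫ ≤ 2 * Anorm1 A := by linarith
    nlinarith
  calc 2 * ∑ i, (‖gvec A σ i‖ ^ 2 - ⟪σ i, gvec A σ i⟫ ^ 2)
      ≤ 2 * ∑ i, 2 * Anorm1 A * (‖gvec A σ i‖ - ⟪σ i, gvec A σ i⟫) := by
        have := Finset.sum_le_sum (fun i (_ : i ∈ univ) => key i)
        linarith
    _ = 2 * Anorm1 A * ∑ i, (fval A (Tupd A σ i) - fval A σ) := by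
        rw [Finset.mul_sum, Finset.mul_sum]
        refine Finset.sum_congr rfl fun i _ => ?_
        rw [fval_Tupd A hA hdiag σ i]
        ring

lemma fval_le_Anorm11 (A : Matrix (Fin n) (Fin n) ℝ) (σ : Conf n r) (hσ : inM σ) :
    fval A σ ≤ Anorm11 A := by
  unfold fval Anorm11
  refine Finset.sum_le_sum fun i _ => Finset.sum_le_sum fun j _ => ?_
  calc A i j * ⟪σ i, σ j⟫ ≤ |A i j * ⟪σ i, σ j⟫| := le_abs_self _
    _ = |A i j| * |⟪σ i, σ j⟫| := abs_mul _ _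
    _ ≤ |A i j| * 1 := by
        refine mul_le_mul_of_nonneg_left ?_ (abs_nonneg _)
        have := abs_real_inner_le_norm (σ i) (σ j)
        rw [hσ i, hσ j, one_mul] at this
        exact this
    _ = |A i j| := mul_one _

lemma fval_le_fstar (A : Matrix (Fin n) (Fin n) ℝ) (σ : Conf n r) (hσ : inM σ) :
    fval A σ ≤ fstar (r := r) A := by
  refine le_csSup ⟨Anorm11 A, ?_⟩ ⟨σ, hσ, rfl⟩
  rintro y ⟨τ, hτ, rfl⟩
  exact fval_le_Anorm11 A τ hτ

lemma count_lemma {K : ℕ} (hn : 0 < n) (A : Matrix (Fin n) (Fin n) ℝ) (σ0 : Conf n r)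
    (k : ℕ) (hk : k < K) (φ : Conf n r → Fin n → ℝ) :
    (∑ ω : Fin K → Fin n,
        ∑ i, φ (iterSeq A σ0 (fun j => if h : j < K then ω ⟨j, h⟩ else ⟨0, hn⟩) k) i)
      = n * ∑ ω : Fin K → Fin n,
          φ (iterSeq A σ0 (fun j => if h : j < K then ω ⟨j, h⟩ else ⟨0, hn⟩) k) (ω ⟨k, hk⟩) := by
  haveI : NeZero n := ⟨hn.ne'⟩
  set kidx : Fin K := ⟨k, hk⟩ with hkidx
  set σk : (Fin K → Fin n) → Conf n r :=
    fun ω => iterSeq A σ0 (fun j => if h : j < K then ω ⟨j, h⟩ else ⟨0, hn⟩) k with hσk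
  have hσcong : ∀ (ω : Fin K → Fin n) (c : Fin n),
      σk (Function.update ω kidx (ω kidx + c)) = σk ω := by
    intro ω c
    refine iterSeq_congr A σ0 _ _ k fun j hj => ?_
    have hjK : j < K := lt_trans hj hk
    rw [dif_pos hjK, dif_pos hjK,
      Function.update_of_ne (Fin.ne_of_val_ne (Nat.ne_of_lt hj))]
  have key_c : ∀ c : Fin n,
      (∑ ω : Fin K → Fin n, φ (σk ω) (ω kidx + c))
        = ∑ ω : Fin K → Fin n, φ (σk ω) (ω kidx) := by
    intro c
    have hbij : Function.Bijective
        (fun ω : Fin K → Fin n => Function.update ω kidx (ω kidx + c)) := by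
      constructor
      · intro ω1 ω2 h
        funext j
        by_cases hj : j = kidx
        · subst hj
          have h2 := congrFun h kidx
          simp only [Function.update_self] at h2
          exact add_right_cancel h2
        · have h2 := congrFun h j
          simpa [Function.update_of_ne hj] using h2
      · intro ω
        refine ⟨Function.update ω kidx (ω kidx - c), ?_⟩
        funext j
        by_cases hj : j = kidx
        · subst hj
          simp [Function.update_self, sub_add_cancel]
        · simp [Function.update_of_ne hj]
    refine Fintype.sum_bijective _ hbij _ _ fun ω => ?_
    rw [hσcong ω c, Function.update_self]
  calc (∑ ω : Fin K → Fin n, ∑ i, φ (σk ω) i)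
      = ∑ ω : Fin K → Fin n, ∑ c : Fin n, φ (σk ω) (ω kidx + c) := by
        refine Finset.sum_congr rfl fun ω _ => ?_
        exact (Fintype.sum_equiv (Equiv.addLeft (ω kidx))
          (fun c => φ (σk ω) (ω kidx + c)) (fun i => φ (σk ω) i) (fun c => rfl)).symm
    _ = ∑ c : Fin n, ∑ ω : Fin K → Fin n, φ (σk ω) (ω kidx + c) := Finset.sum_comm
    _ = ∑ c : Fin n, ∑ ω : Fin K → Fin n, φ (σk ω) (ω kidx) :=
        Finset.sum_congr rfl fun c _ => key_c c
    _ = n * ∑ ω : Fin K → Fin n, φ (σk ω) (ω kidx) := by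
        rw [Finset.sum_const, Finset.card_univ, Fintype.card_fin, nsmul_eq_mul]

end BCMaux

/-- global sublinear convergence of BCM with uniform sampling, in
expectation over all coordinate sequences `ω ∈ {1,…,n}^K`. -/
theorem uniform_bcm_sublinear {n r : ℕ} (hn : 0 < n) (hr : 0 < r)
    (A : Matrix (Fin n) (Fin n) ℝ) (hA : A.IsSymm) (hdiag : ∀ i, A i i = 0) (hA0 : A ≠ 0)
    (σ0 : Conf n r) (hσ0 : inM σ0) (K : ℕ) (hK : 1 ≤ K) :
    ∃ k < K,
      ((n : ℝ) ^ K)⁻¹ * (∑ ω : Fin K → Fin n,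
          gradNormSq A (iterSeq A σ0 (fun j => if h : j < K then ω ⟨j, h⟩ else ⟨0, hn⟩) k))
        ≤ 2 * n * Anorm1 A * (fstar (r := r) A - fval A σ0) / K := by
  classical
  haveI : NeZero n := ⟨hn.ne'⟩
  set σk : (Fin K → Fin n) → ℕ → Conf n r :=
    fun ω m => iterSeq A σ0 (fun j => if h : j < K then ω ⟨j, h⟩ else ⟨0, hn⟩) m with hσk
  set F : ℕ → ℝ := fun m => ∑ ω : Fin K → Fin n, gradNormSq A (σk ω m) with hF
  set S : ℕ → ℝ := fun m => ∑ ω : Fin K → Fin n, fval A (σk ω m) with hS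
  have hinM : ∀ (ω : Fin K → Fin n) (m : ℕ), inM (σk ω m) :=
    fun ω m => BCMaux.inM_iterSeq A σ0 hσ0 _ m
  have hA1 : (0:ℝ) ≤ Anorm1 A := BCMaux.Anorm1_nonneg hn A
  have hnK0 : (0:ℝ) < (n : ℝ) ^ K := by positivity
  have hK0 : (0:ℝ) < (K : ℝ) := by exact_mod_cast hK
  -- one-step inequality
  have hstep : ∀ k, ∀ hk : k < K, F k ≤ 2 * Anorm1 A * n * (S (k + 1) - S k) := by
    intro k hk
    have h1 : F k ≤ ∑ ω : Fin K → Fin n,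
        2 * Anorm1 A * ∑ i, (fval A (Tupd A (σk ω k) i) - fval A (σk ω k)) :=
      Finset.sum_le_sum fun ω _ => BCMaux.gradNormSq_le hn A hA hdiag _ (hinM ω k)
    have h2 : (∑ ω : Fin K → Fin n,
          ∑ i, (fval A (Tupd A (σk ω k) i) - fval A (σk ω k)))
        = n * ∑ ω : Fin K → Fin n,
            (fval A (Tupd A (σk ω k) (ω ⟨k, hk⟩)) - fval A (σk ω k)) :=
      BCMaux.count_lemma hn A σ0 k hk (fun s i => fval A (Tupd A s i) - fval A s)
    have h3 : ∀ ω : Fin K → Fin n, Tupd A (σk ω k) (ω ⟨k, hk⟩) = σk ω (k + 1) := by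
      intro ω
      show _ = iterSeq A σ0 _ (k + 1)
      rw [iterSeq]
      rw [dif_pos hk]
    calc F k ≤ ∑ ω : Fin K → Fin n,
          2 * Anorm1 A * ∑ i, (fval A (Tupd A (σk ω k) i) - fval A (σk ω k)) := h1
      _ = 2 * Anorm1 A * ∑ ω : Fin K → Fin n,
            ∑ i, (fval A (Tupd A (σk ω k) i) - fval A (σk ω k)) := by
          rw [Finset.mul_sum]
      _ = 2 * Anorm1 A * (n * ∑ ω : Fin K → Fin n,
            (fval A (Tupd A (σk ω k) (ω ⟨k, hk⟩)) - fval A (σk ω k))) := by rw [h2]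
      _ = 2 * Anorm1 A * (n * ∑ ω : Fin K → Fin n,
            (fval A (σk ω (k + 1)) - fval A (σk ω k))) := by
          rw [Finset.sum_congr rfl fun ω _ => by rw [h3 ω]]
      _ = 2 * Anorm1 A * ↑n * (S (k + 1) - S k) := by
          rw [Finset.sum_sub_distrib]
          simp only [hS]
          ring
  -- telescoping
  have htel : ∑ k ∈ Finset.range K, F k ≤ 2 * Anorm1 A * n * (S K - S 0) := by
    calc ∑ k ∈ Finset.range K, F k
        ≤ ∑ k ∈ Finset.range K, 2 * Anorm1 A * n * (S (k + 1) - S k) :=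
          Finset.sum_le_sum fun k hk => hstep k (Finset.mem_range.mp hk)
      _ = 2 * Anorm1 A * n * (S K - S 0) := by
          rw [← Finset.mul_sum, Finset.sum_range_sub]
  -- bound S K - S 0
  have hcard : (Fintype.card (Fin K → Fin n) : ℝ) = (n : ℝ) ^ K := by
    rw [Fintype.card_fun, Fintype.card_fin, Fintype.card_fin]
    push_cast
    ring
  have hSK : S K ≤ (n : ℝ) ^ K * fstar (r := r) A := by
    calc S K ≤ ∑ _ω : Fin K → Fin n, fstar (r := r) A :=
        Finset.sum_le_sum fun ω _ => BCMaux.fval_le_fstar A _ (hinM ω K)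
      _ = (n : ℝ) ^ K * fstar (r := r) A := by
          rw [Finset.sum_const, Finset.card_univ, nsmul_eq_mul, hcard]
  have hS0 : S 0 = (n : ℝ) ^ K * fval A σ0 := by
    have : ∀ ω : Fin K → Fin n, σk ω 0 = σ0 := fun ω => rfl
    calc S 0 = ∑ _ω : Fin K → Fin n, fval A σ0 :=
        Finset.sum_congr rfl fun ω _ => by rw [this ω]
      _ = (n : ℝ) ^ K * fval A σ0 := by
          rw [Finset.sum_const, Finset.card_univ, nsmul_eq_mul, hcard]
  set C : ℝ := 2 * (n : ℝ) * Anorm1 A * ((n : ℝ) ^ K) * (fstar (r := r) A - fval A σ0)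
    with hCdef
  have hC : ∑ k ∈ Finset.range K, F k ≤ C := by
    have hd : S K - S 0 ≤ (n : ℝ) ^ K * (fstar (r := r) A - fval A σ0) := by
      rw [hS0]
      have : (n : ℝ) ^ K * (fstar (r := r) A - fval A σ0)
          = (n : ℝ) ^ K * fstar (r := r) A - (n : ℝ) ^ K * fval A σ0 := by ring
      rw [this]
      linarith
    have hnn : (0:ℝ) ≤ 2 * Anorm1 A * n := by positivity
    calc ∑ k ∈ Finset.range K, F k ≤ 2 * Anorm1 A * n * (S K - S 0) := htel
      _ ≤ 2 * Anorm1 A * n * ((n : ℝ) ^ K * (fstar (r := r) A - fval A σ0)) :=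
          mul_le_mul_of_nonneg_left hd hnn
      _ = C := by rw [hCdef]; ring
  -- choose the best k
  have hsum : ∑ k ∈ Finset.range K, F k ≤ ∑ k ∈ Finset.range K, C / K := by
    rw [Finset.sum_const, Finset.card_range, nsmul_eq_mul]
    rw [mul_div_cancel₀ C (ne_of_gt hK0)]
    exact hC
  obtain ⟨k, hkmem, hkle⟩ := Finset.exists_le_of_sum_le
    (Finset.nonempty_range_iff.mpr (Nat.one_le_iff_ne_zero.mp hK)) hsum
  refine ⟨k, Finset.mem_range.mp hkmem, ?_⟩
  have hgoal : ((n : ℝ) ^ K)⁻¹ * F k ≤ ((n : ℝ) ^ K)⁻¹ * (C / K) :=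
    mul_le_mul_of_nonneg_left hkle (by positivity)
  have heq : ((n : ℝ) ^ K)⁻¹ * (C / K)
      = 2 * n * Anorm1 A * (fstar (r := r) A - fval A σ0) / K := by
    rw [hCdef]
    field_simp
  rw [heq] at hgoal
  exact hgoal
end
end

section
/- (Cubic-error Taylor lower bound along geodesics.) For every σ ∈ M_r, every u ∈ T_σ M_r with Frobenius norm ‖u‖_F = 1, and every real t with 0 ≤ t ≤ 1: f(σ(t)) ≥ f(σ) + t G_σ(u) + (t²/2) H_σ(u) − (5 ‖A‖₁ / 2) t³. -/
open scoped BigOperators RealInnerProductSpace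
open Finset Matrix

noncomputable section

lemma sin_err' {x : ℝ} (h0 : 0 ≤ x) (h1 : x ≤ 1) : |Real.sin x - x| ≤ 7/32 * x^3 := by
  have h := Real.sin_bound (x := x) (by rw [abs_of_nonneg h0]; exact h1)
  rw [abs_of_nonneg h0] at h
  have h4 : x^4 ≤ x^3 := pow_le_pow_of_le_one h0 h1 (by norm_num)
  have hx3 : (0:ℝ) ≤ x^3/6 := by positivity
  have tri := abs_sub_abs_le_abs_sub (Real.sin x - x) (Real.sin x - (x - x^3/6))
  have habs : |Real.sin x - x - (Real.sin x - (x - x^3/6))| = x^3/6 := by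
    have e : Real.sin x - x - (Real.sin x - (x - x^3/6)) = -(x^3/6) := by ring
    rw [e, abs_neg, abs_of_nonneg hx3]
  rw [habs] at tri
  nlinarith

lemma cos_err' {x : ℝ} (h0 : 0 ≤ x) (h1 : x ≤ 1) : |Real.cos x - (1 - x^2/2)| ≤ 5/96 * x^3 := by
  have h := Real.cos_bound (x := x) (by rw [abs_of_nonneg h0]; exact h1)
  rw [abs_of_nonneg h0] at h
  have h4 : x^4 ≤ x^3 := pow_le_pow_of_le_one h0 h1 (by norm_num)
  nlinarith

lemma one_sub_cos' {x : ℝ} : |1 - Real.cos x| ≤ x^2/2 := by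
  rw [abs_sub_comm, abs_le]
  constructor
  · have := Real.one_sub_sq_div_two_le_cos (x := x); linarith
  · have := Real.cos_le_one x; nlinarith [sq_nonneg x]

lemma cube_le' {a t : ℝ} (ha0 : 0 ≤ a) (ha1 : a ≤ 1) (ht0 : 0 ≤ t) : (a*t)^3 ≤ a^2*t^3 := by
  nlinarith [mul_nonneg (mul_nonneg (sub_nonneg.2 ha1) (sq_nonneg a)) (pow_nonneg ht0 3)]

lemma mul_le_one'' {a t : ℝ} (ha0 : 0 ≤ a) (ha1 : a ≤ 1) (ht0 : 0 ≤ t) (ht1 : t ≤ 1) :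
    a * t ≤ 1 := by nlinarith

lemma cos_err2 {a t : ℝ} (ha0 : 0 ≤ a) (ha1 : a ≤ 1) (ht0 : 0 ≤ t) (ht1 : t ≤ 1) :
    |Real.cos (a*t) - (1 - (a*t)^2/2)| ≤ 5/96 * (a^2 * t^3) := by
  have h := cos_err' (mul_nonneg ha0 ht0) (mul_le_one'' ha0 ha1 ht0 ht1)
  have h2 := cube_le' ha0 ha1 ht0
  linarith

lemma one_sub_cos2 {a t : ℝ} : |1 - Real.cos (a*t)| ≤ a^2*t^2/2 := by
  have := one_sub_cos' (x := a*t)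
  calc |1 - Real.cos (a*t)| ≤ (a*t)^2/2 := this
    _ = a^2*t^2/2 := by ring

lemma b_abs' {a t : ℝ} (ha0 : 0 ≤ a) (ht0 : 0 ≤ t) : |Real.sin (a*t)/a| ≤ t := by
  rcases eq_or_lt_of_le ha0 with h|h
  · rw [← h]; simpa using ht0
  · rw [abs_div, abs_of_pos h, div_le_iff₀ h]
    calc |Real.sin (a*t)| ≤ |a*t| := Real.abs_sin_le_abs
      _ = a*t := abs_of_nonneg (mul_nonneg ha0 ht0)
      _ = t*a := mul_comm a t

lemma b_err' {a t : ℝ} (ha0 : 0 ≤ a) (ha1 : a ≤ 1) (ht0 : 0 ≤ t) (ht1 : t ≤ 1) :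
    |Real.sin (a*t)/a - t| * a ≤ 7/32 * (a^2*t^3) := by
  rcases eq_or_lt_of_le ha0 with h|h
  · rw [← h]; simp
  · have e1 : |Real.sin (a*t)/a - t| * a = |(Real.sin (a*t)/a - t) * a| := by
      rw [abs_mul, abs_of_pos h]
    have e2 : (Real.sin (a*t)/a - t) * a = Real.sin (a*t) - a*t := by
      field_simp
    rw [e1, e2]
    have h1 := sin_err' (mul_nonneg ha0 ht0) (mul_le_one'' ha0 ha1 ht0 ht1)
    have h2 := cube_le' ha0 ha1 ht0
    linarith



set_option maxHeartbeats 1600000 in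
lemma key_bound' (t ai aj S X Y U bi bj ci cj : ℝ)
    (ht0 : 0 ≤ t) (ht1 : t ≤ 1)
    (hai0 : 0 ≤ ai) (hai1 : ai ≤ 1) (haj0 : 0 ≤ aj) (haj1 : aj ≤ 1)
    (hS : |S| ≤ 1) (hX : |X| ≤ aj) (hY : |Y| ≤ ai) (hU : |U| ≤ ai * aj)
    (hbi : |bi| ≤ t) (hbj : |bj| ≤ t)
    (hbi2 : |bi - t| * ai ≤ 7/32 * (ai^2 * t^3))
    (hbj2 : |bj - t| * aj ≤ 7/32 * (aj^2 * t^3))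
    (hcib : |ci| ≤ 1) (hcjb : |cj| ≤ 1)
    (hei : |ci - (1 - (ai*t)^2/2)| ≤ 5/96 * (ai^2 * t^3))
    (hej : |cj - (1 - (aj*t)^2/2)| ≤ 5/96 * (aj^2 * t^3))
    (h1ci : |1 - ci| ≤ ai^2*t^2/2) (h1cj : |1 - cj| ≤ aj^2*t^2/2) :
    |ci * cj * S + ci * bj * X + bi * cj * Y + bi * bj * U
      - (S + t*X + t*Y + t^2*U - t^2*(ai^2+aj^2)/2*S)| ≤ 5/4 * t^3 * (ai^2+aj^2) := by
  have hi : (0:ℝ) ≤ ai^2*t^3 := by positivity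
  have hj : (0:ℝ) ≤ aj^2*t^3 := by positivity
  have ht3 : (0:ℝ) ≤ t^3 := by positivity
  have ht43 : t^4 ≤ t^3 := pow_le_pow_of_le_one ht0 ht1 (by norm_num)
  -- T1
  have hT1 : |(ci*cj - 1 + t^2*(ai^2+aj^2)/2) * S|
      ≤ (5/96 + 1/4) * (ai^2*t^3) + 5/96 * (aj^2*t^3) := by
    have e1 : |(ci - (1 - (ai*t)^2/2)) * cj| ≤ 5/96 * (ai^2*t^3) := by
      rw [abs_mul]
      calc |ci - (1 - (ai*t)^2/2)| * |cj| ≤ |ci - (1 - (ai*t)^2/2)| * 1 :=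
            mul_le_mul_of_nonneg_left hcjb (abs_nonneg _)
        _ = |ci - (1 - (ai*t)^2/2)| := mul_one _
        _ ≤ _ := hei
    have e3 : |(ai^2*t^2/2) * (1 - cj)| ≤ 1/4 * (ai^2*t^3) := by
      rw [abs_mul, abs_of_nonneg (by positivity : (0:ℝ) ≤ ai^2*t^2/2)]
      calc ai^2*t^2/2 * |1 - cj| ≤ ai^2*t^2/2 * (aj^2*t^2/2) :=
            mul_le_mul_of_nonneg_left h1cj (by positivity)
        _ = ai^2 * (aj^2 * t^4) / 4 := by ring
        _ ≤ ai^2 * (1 * t^3) / 4 := by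
            have h1 : aj^2 * t^4 ≤ 1 * t^4 :=
              mul_le_mul_of_nonneg_right (by nlinarith : aj^2 ≤ 1) (by positivity)
            have h2 : ai^2 * (aj^2*t^4) ≤ ai^2 * (1*t^4) :=
              mul_le_mul_of_nonneg_left h1 (sq_nonneg ai)
            have h3 : ai^2 * (1*t^4) ≤ ai^2 * (1*t^3) :=
              mul_le_mul_of_nonneg_left (by linarith) (sq_nonneg ai)
            linarith
        _ = 1/4 * (ai^2*t^3) := by ring
    have hd : ci*cj - 1 + t^2*(ai^2+aj^2)/2
        = ((ci - (1 - (ai*t)^2/2)) * cj + (cj - (1 - (aj*t)^2/2)))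
          + (ai^2*t^2/2) * (1 - cj) := by ring
    have hb : |ci*cj - 1 + t^2*(ai^2+aj^2)/2|
        ≤ (5/96 + 1/4) * (ai^2*t^3) + 5/96 * (aj^2*t^3) := by
      rw [hd]
      have a1 := abs_add_le ((ci - (1 - (ai*t)^2/2)) * cj + (cj - (1 - (aj*t)^2/2)))
        ((ai^2*t^2/2) * (1 - cj))
      have a2 := abs_add_le ((ci - (1 - (ai*t)^2/2)) * cj) (cj - (1 - (aj*t)^2/2))
      linarith
    rw [abs_mul]
    calc |ci*cj - 1 + t^2*(ai^2+aj^2)/2| * |S| ≤ |ci*cj - 1 + t^2*(ai^2+aj^2)/2| * 1 :=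
          mul_le_mul_of_nonneg_left hS (abs_nonneg _)
      _ = |ci*cj - 1 + t^2*(ai^2+aj^2)/2| := mul_one _
      _ ≤ _ := hb
  -- T2
  have hT2 : |(ci*bj - t) * X| ≤ 7/32 * (aj^2*t^3) + 1/2 * (ai^2*t^3) := by
    have step : |ci*bj - t| ≤ |bj - t| + t * (ai^2*t^2/2) := by
      have hd : ci*bj - t = ci * (bj - t) + t * (ci - 1) := by ring
      rw [hd]
      have a1 := abs_add_le (ci * (bj - t)) (t * (ci - 1))
      have e1 : |ci * (bj - t)| ≤ |bj - t| := by
        rw [abs_mul]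
        calc |ci| * |bj - t| ≤ 1 * |bj - t| :=
              mul_le_mul_of_nonneg_right hcib (abs_nonneg _)
          _ = |bj - t| := one_mul _
      have e2 : |t * (ci - 1)| ≤ t * (ai^2*t^2/2) := by
        rw [abs_mul, abs_of_nonneg ht0, abs_sub_comm]
        exact mul_le_mul_of_nonneg_left h1ci ht0
      linarith
    rw [abs_mul]
    calc |ci*bj - t| * |X| ≤ |ci*bj - t| * aj := mul_le_mul_of_nonneg_left hX (abs_nonneg _)
      _ ≤ (|bj - t| + t * (ai^2*t^2/2)) * aj := mul_le_mul_of_nonneg_right step haj0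
      _ = |bj - t| * aj + (ai^2*t^3/2) * aj := by ring
      _ ≤ 7/32 * (aj^2*t^3) + (ai^2*t^3/2) * 1 := by
          have := mul_le_mul_of_nonneg_left haj1 (by positivity : (0:ℝ) ≤ ai^2*t^3/2)
          linarith
      _ = 7/32 * (aj^2*t^3) + 1/2 * (ai^2*t^3) := by ring
  -- T3
  have hT3 : |(bi*cj - t) * Y| ≤ 7/32 * (ai^2*t^3) + 1/2 * (aj^2*t^3) := by
    have step : |bi*cj - t| ≤ |bi - t| + t * (aj^2*t^2/2) := by
      have hd : bi*cj - t = cj * (bi - t) + t * (cj - 1) := by ring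
      rw [hd]
      have a1 := abs_add_le (cj * (bi - t)) (t * (cj - 1))
      have e1 : |cj * (bi - t)| ≤ |bi - t| := by
        rw [abs_mul]
        calc |cj| * |bi - t| ≤ 1 * |bi - t| :=
              mul_le_mul_of_nonneg_right hcjb (abs_nonneg _)
          _ = |bi - t| := one_mul _
      have e2 : |t * (cj - 1)| ≤ t * (aj^2*t^2/2) := by
        rw [abs_mul, abs_of_nonneg ht0, abs_sub_comm]
        exact mul_le_mul_of_nonneg_left h1cj ht0
      linarith
    rw [abs_mul]
    calc |bi*cj - t| * |Y| ≤ |bi*cj - t| * ai := mul_le_mul_of_nonneg_left hY (abs_nonneg _)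
      _ ≤ (|bi - t| + t * (aj^2*t^2/2)) * ai := mul_le_mul_of_nonneg_right step hai0
      _ = |bi - t| * ai + (aj^2*t^3/2) * ai := by ring
      _ ≤ 7/32 * (ai^2*t^3) + (aj^2*t^3/2) * 1 := by
          have := mul_le_mul_of_nonneg_left hai1 (by positivity : (0:ℝ) ≤ aj^2*t^3/2)
          linarith
      _ = 7/32 * (ai^2*t^3) + 1/2 * (aj^2*t^3) := by ring
  -- T4
  have hT4 : |(bi*bj - t^2) * U| ≤ 7/32 * (aj^2*t^3) + 7/32 * (ai^2*t^3) := by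
    have step : |bi*bj - t^2| ≤ t * |bj - t| + t * |bi - t| := by
      have hd : bi*bj - t^2 = bi * (bj - t) + t * (bi - t) := by ring
      rw [hd]
      have a1 := abs_add_le (bi * (bj - t)) (t * (bi - t))
      have e1 : |bi * (bj - t)| ≤ t * |bj - t| := by
        rw [abs_mul]; exact mul_le_mul_of_nonneg_right hbi (abs_nonneg _)
      have e2 : |t * (bi - t)| = t * |bi - t| := by rw [abs_mul, abs_of_nonneg ht0]
      linarith
    rw [abs_mul]
    calc |bi*bj - t^2| * |U| ≤ |bi*bj - t^2| * (ai*aj) :=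
          mul_le_mul_of_nonneg_left hU (abs_nonneg _)
      _ ≤ (t * |bj - t| + t * |bi - t|) * (ai*aj) :=
          mul_le_mul_of_nonneg_right step (mul_nonneg hai0 haj0)
      _ = (|bj - t| * aj) * (t * ai) + (|bi - t| * ai) * (t * aj) := by ring
      _ ≤ (|bj - t| * aj) * 1 + (|bi - t| * ai) * 1 := by
          have c1 : t * ai ≤ 1 := by
            calc t * ai ≤ 1 * 1 := mul_le_mul ht1 hai1 hai0 (by norm_num)
              _ = 1 := by norm_num
          have c2 : t * aj ≤ 1 := by
            calc t * aj ≤ 1 * 1 := mul_le_mul ht1 haj1 haj0 (by norm_num)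
              _ = 1 := by norm_num
          have d1 := mul_le_mul_of_nonneg_left c1 (mul_nonneg (abs_nonneg (bj-t)) haj0)
          have d2 := mul_le_mul_of_nonneg_left c2 (mul_nonneg (abs_nonneg (bi-t)) hai0)
          linarith
      _ = |bj - t| * aj + |bi - t| * ai := by ring
      _ ≤ 7/32 * (aj^2*t^3) + 7/32 * (ai^2*t^3) := by linarith
  -- combine
  have hdecomp : ci * cj * S + ci * bj * X + bi * cj * Y + bi * bj * U
      - (S + t*X + t*Y + t^2*U - t^2*(ai^2+aj^2)/2*S)
      = (ci*cj - 1 + t^2*(ai^2+aj^2)/2) * S + ((ci*bj - t) * X + ((bi*cj - t) * Y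
        + (bi*bj - t^2) * U)) := by ring
  rw [hdecomp]
  have a1 := abs_add_le ((ci*cj - 1 + t^2*(ai^2+aj^2)/2) * S)
    ((ci*bj - t) * X + ((bi*cj - t) * Y + (bi*bj - t^2) * U))
  have a2 := abs_add_le ((ci*bj - t) * X) ((bi*cj - t) * Y + (bi*bj - t^2) * U)
  have a3 := abs_add_le ((bi*cj - t) * Y) ((bi*bj - t^2) * U)
  have : 5/4 * t^3 * (ai^2+aj^2) = 5/4 * (ai^2*t^3) + 5/4 * (aj^2*t^3) := by ring
  linarith


/-- cubic-error Taylor lower bound along geodesics. -/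
theorem geodesic_taylor_lower_bound {n r : ℕ} (hn : 0 < n) (hr : 0 < r)
    (A : Matrix (Fin n) (Fin n) ℝ) (hA : A.IsSymm) (hdiag : ∀ i, A i i = 0)
    (σ : Conf n r) (hσ : inM σ) (u : Conf n r) (hu : tangent σ u) (hun : fnormSq u = 1)
    (t : ℝ) (ht0 : 0 ≤ t) (ht1 : t ≤ 1) :
    fval A σ + t * Gform A σ u + t ^ 2 / 2 * Hform A σ u - 5 * Anorm1 A / 2 * t ^ 3
      ≤ fval A (geo σ u t) := by
  classical
  have hgv : ∀ (τ : Conf n r) (i : Fin n), gvec A τ i = ∑ j, A i j • τ j := fun τ i =>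
    Finset.sum_erase _ (by rw [hdiag i, zero_smul])
  have hinner : ∀ (x : Pt r) (τ : Conf n r) (i : Fin n),
      ⟪x, gvec A τ i⟫ = ∑ j, A i j * ⟪x, τ j⟫ := by
    intro x τ i
    rw [hgv, inner_sum]
    exact Finset.sum_congr rfl fun j _ => real_inner_smul_right _ _ _
  have hsq : ∀ i, ‖u i‖^2 ≤ 1 := by
    intro i
    calc ‖u i‖^2 ≤ ∑ j, ‖u j‖^2 :=
          Finset.single_le_sum (f := fun j : Fin n => ‖u j‖^2) (fun j _ => sq_nonneg _)
            (Finset.mem_univ i)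
      _ = 1 := hun
  have ha1 : ∀ i, ‖u i‖ ≤ 1 := fun i => by nlinarith [hsq i, norm_nonneg (u i)]
  -- swap lemma
  have hswap : ∀ v w : Conf n r,
      ∑ i, ∑ j, A i j * ⟪v i, w j⟫ = ∑ i, ∑ j, A i j * ⟪w i, v j⟫ := by
    intro v w
    rw [Finset.sum_comm]
    exact Finset.sum_congr rfl fun i _ => Finset.sum_congr rfl fun j _ => by
      rw [hA.apply, real_inner_comm]
  have hswap2 : ∑ i, ∑ j, A i j * (‖u i‖^2 * ⟪σ i, σ j⟫)
      = ∑ i, ∑ j, A i j * (‖u j‖^2 * ⟪σ i, σ j⟫) := by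
    rw [Finset.sum_comm]
    exact Finset.sum_congr rfl fun i _ => Finset.sum_congr rfl fun j _ => by
      rw [hA.apply, real_inner_comm]
  -- forms as double sums
  have hG : Gform A σ u = (∑ i, ∑ j, A i j * ⟪u i, σ j⟫) + ∑ i, ∑ j, A i j * ⟪σ i, u j⟫ := by
    unfold Gform
    rw [Finset.sum_congr rfl fun i _ => hinner (u i) σ i, two_mul]
    congr 1
    exact hswap u σ
  have hH : Hform A σ u = 2 * (∑ i, ∑ j, A i j * ⟪u i, u j⟫)
      - ((∑ i, ∑ j, A i j * (‖u i‖^2 * ⟪σ i, σ j⟫))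
        + ∑ i, ∑ j, A i j * (‖u j‖^2 * ⟪σ i, σ j⟫)) := by
    unfold Hform
    have h1 : ∀ i : Fin n, ⟪u i, gvec A u i⟫ - ‖u i‖^2 * ⟪σ i, gvec A σ i⟫
        = (∑ j, A i j * ⟪u i, u j⟫) - ∑ j, A i j * (‖u i‖^2 * ⟪σ i, σ j⟫) := by
      intro i
      rw [hinner, hinner, Finset.mul_sum]
      congr 1
      exact Finset.sum_congr rfl fun j _ => by ring
    rw [Finset.sum_congr rfl fun i _ => h1 i, Finset.sum_sub_distrib, ← hswap2]
    ring
  -- the quadratic model as a double sum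
  have hP : ∑ i, ∑ j, A i j * (⟪σ i, σ j⟫ + t*⟪σ i, u j⟫ + t*⟪u i, σ j⟫ + t^2*⟪u i, u j⟫
        - t^2*(‖u i‖^2+‖u j‖^2)/2*⟪σ i, σ j⟫)
      = fval A σ + t * Gform A σ u + t^2/2 * Hform A σ u := by
    have step1 : ∑ i, ∑ j, A i j * (⟪σ i, σ j⟫ + t*⟪σ i, u j⟫ + t*⟪u i, σ j⟫ + t^2*⟪u i, u j⟫
          - t^2*(‖u i‖^2+‖u j‖^2)/2*⟪σ i, σ j⟫)
        = ∑ i, ∑ j, (A i j * ⟪σ i, σ j⟫ + t*(A i j * ⟪σ i, u j⟫) + t*(A i j * ⟪u i, σ j⟫)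
            + t^2*(A i j * ⟪u i, u j⟫) - t^2/2*(A i j * (‖u i‖^2 * ⟪σ i, σ j⟫))
            - t^2/2*(A i j * (‖u j‖^2 * ⟪σ i, σ j⟫))) :=
      Finset.sum_congr rfl fun i _ => Finset.sum_congr rfl fun j _ => by ring
    rw [step1]
    simp only [Finset.sum_add_distrib, Finset.sum_sub_distrib, ← Finset.mul_sum]
    rw [hG, hH]
    unfold fval
    ring
  -- expansion of f along the geodesic
  have hgeo : ∀ i j, ⟪geo σ u t i, geo σ u t j⟫
      = Real.cos (‖u i‖*t) * Real.cos (‖u j‖*t) * ⟪σ i, σ j⟫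
        + Real.cos (‖u i‖*t) * (Real.sin (‖u j‖*t)/‖u j‖) * ⟪σ i, u j⟫
        + (Real.sin (‖u i‖*t)/‖u i‖) * Real.cos (‖u j‖*t) * ⟪u i, σ j⟫
        + (Real.sin (‖u i‖*t)/‖u i‖) * (Real.sin (‖u j‖*t)/‖u j‖) * ⟪u i, u j⟫ := by
    intro i j
    simp only [geo, inner_add_left, inner_add_right, real_inner_smul_left,
      real_inner_smul_right]
    ring
  have hfgeo : fval A (geo σ u t) = ∑ i, ∑ j, A i j *
      (Real.cos (‖u i‖*t) * Real.cos (‖u j‖*t) * ⟪σ i, σ j⟫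
        + Real.cos (‖u i‖*t) * (Real.sin (‖u j‖*t)/‖u j‖) * ⟪σ i, u j⟫
        + (Real.sin (‖u i‖*t)/‖u i‖) * Real.cos (‖u j‖*t) * ⟪u i, σ j⟫
        + (Real.sin (‖u i‖*t)/‖u i‖) * (Real.sin (‖u j‖*t)/‖u j‖) * ⟪u i, u j⟫) := by
    unfold fval
    exact Finset.sum_congr rfl fun i _ => Finset.sum_congr rfl fun j _ => by rw [hgeo i j]
  -- per-pair remainder bound
  have hkey : ∀ i j : Fin n,
      |(Real.cos (‖u i‖*t) * Real.cos (‖u j‖*t) * ⟪σ i, σ j⟫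
        + Real.cos (‖u i‖*t) * (Real.sin (‖u j‖*t)/‖u j‖) * ⟪σ i, u j⟫
        + (Real.sin (‖u i‖*t)/‖u i‖) * Real.cos (‖u j‖*t) * ⟪u i, σ j⟫
        + (Real.sin (‖u i‖*t)/‖u i‖) * (Real.sin (‖u j‖*t)/‖u j‖) * ⟪u i, u j⟫)
        - (⟪σ i, σ j⟫ + t*⟪σ i, u j⟫ + t*⟪u i, σ j⟫ + t^2*⟪u i, u j⟫
          - t^2*(‖u i‖^2+‖u j‖^2)/2*⟪σ i, σ j⟫)| ≤ 5/4 * t^3 * (‖u i‖^2 + ‖u j‖^2) := by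
    intro i j
    refine key_bound' t (‖u i‖) (‖u j‖) _ _ _ _ _ _ _ _ ht0 ht1
      (norm_nonneg _) (ha1 i) (norm_nonneg _) (ha1 j) ?_ ?_ ?_
      (abs_real_inner_le_norm _ _) (b_abs' (norm_nonneg _) ht0) (b_abs' (norm_nonneg _) ht0)
      (b_err' (norm_nonneg _) (ha1 i) ht0 ht1) (b_err' (norm_nonneg _) (ha1 j) ht0 ht1)
      (Real.abs_cos_le_one _) (Real.abs_cos_le_one _)
      (cos_err2 (norm_nonneg _) (ha1 i) ht0 ht1) (cos_err2 (norm_nonneg _) (ha1 j) ht0 ht1)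
      one_sub_cos2 one_sub_cos2
    · calc |⟪σ i, σ j⟫| ≤ ‖σ i‖ * ‖σ j‖ := abs_real_inner_le_norm _ _
        _ = 1 := by rw [hσ i, hσ j, mul_one]
    · calc |⟪σ i, u j⟫| ≤ ‖σ i‖ * ‖u j‖ := abs_real_inner_le_norm _ _
        _ = ‖u j‖ := by rw [hσ i, one_mul]
    · calc |⟪u i, σ j⟫| ≤ ‖u i‖ * ‖σ j‖ := abs_real_inner_le_norm _ _
        _ = ‖u i‖ := by rw [hσ j, mul_one]
  -- column-sum bound
  have hCS : ∀ j, ∑ i, |A i j| ≤ Anorm1 A := fun j =>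
    le_ciSup (f := fun j => ∑ i, |A i j|) (Set.Finite.bddAbove (Set.finite_range _)) j
  have hrow : ∀ i, ∑ j, |A i j| ≤ Anorm1 A := by
    intro i
    have : ∑ j, |A i j| = ∑ j, |A j i| :=
      Finset.sum_congr rfl fun j _ => by rw [hA.apply]
    rw [this]
    exact hCS i
  have hB : ∑ i, ∑ j, |A i j| * (‖u i‖^2 + ‖u j‖^2) ≤ 2 * Anorm1 A := by
    have e : ∑ i, ∑ j, |A i j| * (‖u i‖^2 + ‖u j‖^2)
        = (∑ i, ∑ j, |A i j| * ‖u i‖^2) + ∑ i, ∑ j, |A i j| * ‖u j‖^2 := by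
      simp only [mul_add, Finset.sum_add_distrib]
    have h1 : ∑ i, ∑ j, |A i j| * ‖u i‖^2 ≤ Anorm1 A := by
      have e1 : ∀ i : Fin n, ∑ j, |A i j| * ‖u i‖^2 = (∑ j, |A i j|) * ‖u i‖^2 := fun i =>
        (Finset.sum_mul _ _ _).symm
      rw [Finset.sum_congr rfl fun i _ => e1 i]
      calc ∑ i, (∑ j, |A i j|) * ‖u i‖^2 ≤ ∑ i, Anorm1 A * ‖u i‖^2 :=
            Finset.sum_le_sum fun i _ => mul_le_mul_of_nonneg_right (hrow i) (sq_nonneg _)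
        _ = Anorm1 A * fnormSq u := by rw [← Finset.mul_sum]; rfl
        _ = Anorm1 A := by rw [hun, mul_one]
    have h2 : ∑ i, ∑ j, |A i j| * ‖u j‖^2 ≤ Anorm1 A := by
      rw [Finset.sum_comm]
      have e1 : ∀ j : Fin n, ∑ i, |A i j| * ‖u j‖^2 = (∑ i, |A i j|) * ‖u j‖^2 := fun j =>
        (Finset.sum_mul _ _ _).symm
      rw [Finset.sum_congr rfl fun j _ => e1 j]
      calc ∑ j, (∑ i, |A i j|) * ‖u j‖^2 ≤ ∑ j, Anorm1 A * ‖u j‖^2 :=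
            Finset.sum_le_sum fun j _ => mul_le_mul_of_nonneg_right (hCS j) (sq_nonneg _)
        _ = Anorm1 A * fnormSq u := by rw [← Finset.mul_sum]; rfl
        _ = Anorm1 A := by rw [hun, mul_one]
    linarith
  -- assemble
  have hdiff : fval A (geo σ u t) - (fval A σ + t * Gform A σ u + t^2/2 * Hform A σ u)
      = ∑ i, ∑ j, A i j *
        ((Real.cos (‖u i‖*t) * Real.cos (‖u j‖*t) * ⟪σ i, σ j⟫
          + Real.cos (‖u i‖*t) * (Real.sin (‖u j‖*t)/‖u j‖) * ⟪σ i, u j⟫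
          + (Real.sin (‖u i‖*t)/‖u i‖) * Real.cos (‖u j‖*t) * ⟪u i, σ j⟫
          + (Real.sin (‖u i‖*t)/‖u i‖) * (Real.sin (‖u j‖*t)/‖u j‖) * ⟪u i, u j⟫)
        - (⟪σ i, σ j⟫ + t*⟪σ i, u j⟫ + t*⟪u i, σ j⟫ + t^2*⟪u i, u j⟫
          - t^2*(‖u i‖^2+‖u j‖^2)/2*⟪σ i, σ j⟫)) := by
    rw [hfgeo, ← hP, ← Finset.sum_sub_distrib]
    refine Finset.sum_congr rfl fun i _ => ?_
    rw [← Finset.sum_sub_distrib]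
    exact Finset.sum_congr rfl fun j _ => (mul_sub _ _ _).symm
  have habs : |fval A (geo σ u t) - (fval A σ + t * Gform A σ u + t^2/2 * Hform A σ u)|
      ≤ 5/2 * Anorm1 A * t^3 := by
    rw [hdiff]
    calc |∑ i, ∑ j, A i j * (_ - _)| ≤ ∑ i, |∑ j, A i j * _| :=
          Finset.abs_sum_le_sum_abs _ _
      _ ≤ ∑ i, ∑ j, |A i j * _| :=
          Finset.sum_le_sum fun i _ => Finset.abs_sum_le_sum_abs _ _
      _ ≤ ∑ i, ∑ j, |A i j| * (5/4 * t^3 * (‖u i‖^2 + ‖u j‖^2)) :=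
          Finset.sum_le_sum fun i _ => Finset.sum_le_sum fun j _ => by
            rw [abs_mul]
            exact mul_le_mul_of_nonneg_left (hkey i j) (abs_nonneg _)
      _ = 5/4 * t^3 * ∑ i, ∑ j, |A i j| * (‖u i‖^2 + ‖u j‖^2) := by
          simp only [Finset.mul_sum]
          exact Finset.sum_congr rfl fun i _ => Finset.sum_congr rfl fun j _ => by ring
      _ ≤ 5/4 * t^3 * (2 * Anorm1 A) := by
          have h34 : (0:ℝ) ≤ 5/4 * t^3 := by positivity
          exact mul_le_mul_of_nonneg_left hB h34
      _ = 5/2 * Anorm1 A * t^3 := by ring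
  have := neg_abs_le (fval A (geo σ u t) - (fval A σ + t * Gform A σ u + t^2/2 * Hform A σ u))
  have h52 : 5 * Anorm1 A / 2 * t ^ 3 = 5/2 * Anorm1 A * t^3 := by ring
  linarith
end
end

section
/- (Second-order Taylor approximation of f at a stationary point, with explicit cubic error.) Let σ̄ ∈ M_r be a stationary point, i.e. g_i(σ̄) ≠ 0 and σ̄_i = g_i(σ̄)/‖g_i(σ̄)‖ for every i. Let u ∈ T_σ̄ M_r with ‖u‖_F = 1 and let 0 ≤ t ≤ 1. Then |f(σ̄(t)) − f(σ̄) − t² Σ_{i=1}^n (⟨u_i, v_i⟩ − ‖u_i‖² ‖g_i(σ̄)‖)| ≤ (5 n ‖A‖₁ / 2) t³, where v_i = Σ_{j≠i} A_{ij} u_j. -/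
open scoped BigOperators RealInnerProductSpace
open Finset Matrix

noncomputable section

lemma aux_sin_taylor {x : ℝ} (h0 : 0 ≤ x) (h1 : x ≤ 1) :
    |Real.sin x - x| ≤ 7 / 32 * x ^ 3 := by
  have hb := Real.sin_bound (x := x) (by rwa [abs_of_nonneg h0])
  rw [abs_of_nonneg h0] at hb
  have h4 : x ^ 4 ≤ x ^ 3 := pow_le_pow_of_le_one h0 h1 (by norm_num)
  have h5 : |Real.sin x - x| ≤ |Real.sin x - (x - x ^ 3 / 6)| + |x ^ 3 / 6| := by
    calc |Real.sin x - x| = |(Real.sin x - (x - x ^ 3 / 6)) + (-(x ^ 3 / 6))| := by ring_nf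
      _ ≤ |Real.sin x - (x - x ^ 3 / 6)| + |-(x ^ 3 / 6)| := abs_add_le _ _
      _ = |Real.sin x - (x - x ^ 3 / 6)| + |x ^ 3 / 6| := by rw [abs_neg]
  have hx3 : |x ^ 3 / 6| = x ^ 3 / 6 := abs_of_nonneg (by positivity)
  nlinarith [h5, hb, hx3, pow_le_pow_of_le_one h0 h1 (show 3 ≤ 5 by norm_num)]

lemma aux_cos_taylor {x : ℝ} (h0 : 0 ≤ x) (h1 : x ≤ 1) :
    |Real.cos x - (1 - x ^ 2 / 2)| ≤ 5 / 96 * x ^ 3 := by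
  have hb := Real.cos_bound (x := x) (by rwa [abs_of_nonneg h0])
  rw [abs_of_nonneg h0] at hb
  have h4 : x ^ 4 ≤ x ^ 3 := pow_le_pow_of_le_one h0 h1 (by norm_num)
  nlinarith

lemma aux_cos_sub_one (x : ℝ) : |Real.cos x - 1| ≤ x ^ 2 / 2 := by
  rw [abs_sub_comm, abs_of_nonneg (by nlinarith [Real.cos_le_one x])]
  nlinarith [Real.one_sub_sq_div_two_le_cos (x := x)]

lemma aux_abs_sin_le {x : ℝ} (h0 : 0 ≤ x) : |Real.sin x| ≤ x := by
  have := Real.abs_sin_le_abs (x := x)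
  rwa [abs_of_nonneg h0] at this

lemma Dbound {r : ℕ} {t : ℝ} (ht0 : 0 ≤ t) (ht1 : t ≤ 1)
    (x y p q : EuclideanSpace ℝ (Fin r)) (hx : ‖x‖ = 1) (hy : ‖y‖ = 1)
    (hp : ‖p‖ ≤ 1) (hq : ‖q‖ ≤ 1) :
    |⟪Real.cos (‖p‖ * t) • x + (Real.sin (‖p‖ * t) / ‖p‖) • p,
        Real.cos (‖q‖ * t) • y + (Real.sin (‖q‖ * t) / ‖q‖) • q⟫
      - ⟪x, y⟫ - t * (⟪x, q⟫ + ⟪p, y⟫)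
      - t ^ 2 * (⟪p, q⟫ - (‖p‖ ^ 2 + ‖q‖ ^ 2) / 2 * ⟪x, y⟫)|
      ≤ 5 / 2 * t ^ 3 := by
  have hp0 : (0:ℝ) ≤ ‖p‖ := norm_nonneg _
  have hq0 : (0:ℝ) ≤ ‖q‖ := norm_nonneg _
  set a := ‖p‖ * t with hadef
  set b := ‖q‖ * t with hbdef
  have ha0 : 0 ≤ a := mul_nonneg hp0 ht0
  have hb0 : 0 ≤ b := mul_nonneg hq0 ht0
  have hat : a ≤ t := by rw [hadef]; nlinarith
  have hbt : b ≤ t := by rw [hbdef]; nlinarith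
  have ha1 : a ≤ 1 := hat.trans ht1
  have hb1 : b ≤ 1 := hbt.trans ht1
  have ht3 : (0:ℝ) ≤ t ^ 3 := by positivity
  have ha3 : a ^ 3 ≤ t ^ 3 := pow_le_pow_left₀ ha0 hat 3
  have hb3 : b ^ 3 ≤ t ^ 3 := pow_le_pow_left₀ hb0 hbt 3
  have ha2 : a ^ 2 ≤ t ^ 2 := pow_le_pow_left₀ ha0 hat 2
  have hb2 : b ^ 2 ≤ t ^ 2 := pow_le_pow_left₀ hb0 hbt 2
  have ht4 : t ^ 4 ≤ t ^ 3 := pow_le_pow_of_le_one ht0 ht1 (by norm_num)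
  have hsap : Real.sin a / ‖p‖ * ‖p‖ = Real.sin a := by
    rcases eq_or_ne ‖p‖ 0 with h | h
    · rw [h, hadef, h]; simp
    · field_simp
  have hsbq : Real.sin b / ‖q‖ * ‖q‖ = Real.sin b := by
    rcases eq_or_ne ‖q‖ 0 with h | h
    · rw [h, hbdef, h]; simp
    · field_simp
  have hE : ⟪Real.cos a • x + (Real.sin a / ‖p‖) • p,
      Real.cos b • y + (Real.sin b / ‖q‖) • q⟫
      - ⟪x, y⟫ - t * (⟪x, q⟫ + ⟪p, y⟫)
      - t ^ 2 * (⟪p, q⟫ - (‖p‖ ^ 2 + ‖q‖ ^ 2) / 2 * ⟪x, y⟫)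
      = (Real.cos a * Real.cos b - 1 + t ^ 2 * (‖p‖ ^ 2 + ‖q‖ ^ 2) / 2) * ⟪x, y⟫
        + (Real.cos a * (Real.sin b / ‖q‖) - t) * ⟪x, q⟫
        + ((Real.sin a / ‖p‖) * Real.cos b - t) * ⟪p, y⟫
        + ((Real.sin a / ‖p‖) * (Real.sin b / ‖q‖) - t ^ 2) * ⟪p, q⟫ := by
    simp only [inner_add_left, inner_add_right, real_inner_smul_left, real_inner_smul_right]
    ring
  rw [hE]
  -- bound each of the four pieces
  have hca := aux_cos_sub_one a
  have hcb := aux_cos_sub_one b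
  have hca3 := aux_cos_taylor ha0 ha1
  have hcb3 := aux_cos_taylor hb0 hb1
  have hsa := aux_sin_taylor ha0 ha1
  have hsb := aux_sin_taylor hb0 hb1
  have hsa' := aux_abs_sin_le ha0
  have hsb' := aux_abs_sin_le hb0
  -- piece 1
  have h1 : |(Real.cos a * Real.cos b - 1 + t ^ 2 * (‖p‖ ^ 2 + ‖q‖ ^ 2) / 2) * ⟪x, y⟫|
      ≤ 17 / 48 * t ^ 3 := by
    have hxy : |⟪x, y⟫| ≤ 1 := by
      have := abs_real_inner_le_norm x y; rwa [hx, hy, one_mul] at this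
    have hid : Real.cos a * Real.cos b - 1 + t ^ 2 * (‖p‖ ^ 2 + ‖q‖ ^ 2) / 2
        = (Real.cos a - 1) * (Real.cos b - 1) + (Real.cos a - (1 - a ^ 2 / 2))
          + (Real.cos b - (1 - b ^ 2 / 2)) := by
      rw [hadef, hbdef]; ring
    have htri : |Real.cos a * Real.cos b - 1 + t ^ 2 * (‖p‖ ^ 2 + ‖q‖ ^ 2) / 2|
        ≤ |(Real.cos a - 1) * (Real.cos b - 1)| + |Real.cos a - (1 - a ^ 2 / 2)|
          + |Real.cos b - (1 - b ^ 2 / 2)| := by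
      rw [hid]; exact abs_add_three _ _ _
    have hprod : |(Real.cos a - 1) * (Real.cos b - 1)| ≤ a ^ 2 / 2 * (b ^ 2 / 2) := by
      rw [abs_mul]; exact mul_le_mul hca hcb (abs_nonneg _) (by positivity)
    have hab : a ^ 2 / 2 * (b ^ 2 / 2) ≤ t ^ 3 / 4 := by
      have e1 : a ^ 2 * b ^ 2 ≤ t ^ 2 * t ^ 2 := mul_le_mul ha2 hb2 (sq_nonneg b) (sq_nonneg t)
      have e2 : t ^ 2 * t ^ 2 = t ^ 4 := by ring
      linarith
    have hM : |Real.cos a * Real.cos b - 1 + t ^ 2 * (‖p‖ ^ 2 + ‖q‖ ^ 2) / 2|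
        ≤ 17 / 48 * t ^ 3 := by linarith
    rw [abs_mul]
    calc |Real.cos a * Real.cos b - 1 + t ^ 2 * (‖p‖ ^ 2 + ‖q‖ ^ 2) / 2| * |⟪x, y⟫|
        ≤ 17 / 48 * t ^ 3 * 1 := mul_le_mul hM hxy (abs_nonneg _) (by positivity)
      _ = 17 / 48 * t ^ 3 := mul_one _
  -- piece 2
  have h2 : |(Real.cos a * (Real.sin b / ‖q‖) - t) * ⟪x, q⟫| ≤ 23 / 32 * t ^ 3 := by
    have hxq : |⟪x, q⟫| ≤ ‖q‖ := by
      have := abs_real_inner_le_norm x q; rwa [hx, one_mul] at this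
    have key : |(Real.cos a * (Real.sin b / ‖q‖) - t) * ‖q‖| ≤ 23 / 32 * t ^ 3 := by
      have hid : (Real.cos a * (Real.sin b / ‖q‖) - t) * ‖q‖
          = (Real.cos a - 1) * Real.sin b + (Real.sin b - b) := by
        have : (Real.cos a * (Real.sin b / ‖q‖) - t) * ‖q‖
            = Real.cos a * (Real.sin b / ‖q‖ * ‖q‖) - t * ‖q‖ := by ring
        rw [this, hsbq, hbdef]; ring
      rw [hid]
      have htr := abs_add_le ((Real.cos a - 1) * Real.sin b) (Real.sin b - b)
      have hprod : |(Real.cos a - 1) * Real.sin b| ≤ a ^ 2 / 2 * b := by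
        rw [abs_mul]; exact mul_le_mul hca hsb' (abs_nonneg _) (by positivity)
      have e1 : a ^ 2 * b ≤ t ^ 2 * t := mul_le_mul ha2 hbt hb0 (sq_nonneg t)
      have e2 : t ^ 2 * t = t ^ 3 := by ring
      linarith
    calc |(Real.cos a * (Real.sin b / ‖q‖) - t) * ⟪x, q⟫|
        ≤ |Real.cos a * (Real.sin b / ‖q‖) - t| * ‖q‖ := by
          rw [abs_mul]; exact mul_le_mul_of_nonneg_left hxq (abs_nonneg _)
      _ = |(Real.cos a * (Real.sin b / ‖q‖) - t) * ‖q‖| := by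
          rw [abs_mul, abs_of_nonneg hq0]
      _ ≤ 23 / 32 * t ^ 3 := key
  -- piece 3
  have h3 : |((Real.sin a / ‖p‖) * Real.cos b - t) * ⟪p, y⟫| ≤ 23 / 32 * t ^ 3 := by
    have hpy : |⟪p, y⟫| ≤ ‖p‖ := by
      have := abs_real_inner_le_norm p y; rwa [hy, mul_one] at this
    have key : |((Real.sin a / ‖p‖) * Real.cos b - t) * ‖p‖| ≤ 23 / 32 * t ^ 3 := by
      have hid : ((Real.sin a / ‖p‖) * Real.cos b - t) * ‖p‖
          = (Real.cos b - 1) * Real.sin a + (Real.sin a - a) := by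
        have : ((Real.sin a / ‖p‖) * Real.cos b - t) * ‖p‖
            = (Real.sin a / ‖p‖ * ‖p‖) * Real.cos b - t * ‖p‖ := by ring
        rw [this, hsap, hadef]; ring
      rw [hid]
      have htr := abs_add_le ((Real.cos b - 1) * Real.sin a) (Real.sin a - a)
      have hprod : |(Real.cos b - 1) * Real.sin a| ≤ b ^ 2 / 2 * a := by
        rw [abs_mul]; exact mul_le_mul hcb hsa' (abs_nonneg _) (by positivity)
      have e1 : b ^ 2 * a ≤ t ^ 2 * t := mul_le_mul hb2 hat ha0 (sq_nonneg t)
      have e2 : t ^ 2 * t = t ^ 3 := by ring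
      linarith
    calc |((Real.sin a / ‖p‖) * Real.cos b - t) * ⟪p, y⟫|
        ≤ |(Real.sin a / ‖p‖) * Real.cos b - t| * ‖p‖ := by
          rw [abs_mul]; exact mul_le_mul_of_nonneg_left hpy (abs_nonneg _)
      _ = |((Real.sin a / ‖p‖) * Real.cos b - t) * ‖p‖| := by
          rw [abs_mul, abs_of_nonneg hp0]
      _ ≤ 23 / 32 * t ^ 3 := key
  -- piece 4
  have h4 : |((Real.sin a / ‖p‖) * (Real.sin b / ‖q‖) - t ^ 2) * ⟪p, q⟫| ≤ 7 / 16 * t ^ 3 := by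
    have hpq : |⟪p, q⟫| ≤ ‖p‖ * ‖q‖ := abs_real_inner_le_norm p q
    have key : |((Real.sin a / ‖p‖) * (Real.sin b / ‖q‖) - t ^ 2) * (‖p‖ * ‖q‖)|
        ≤ 7 / 16 * t ^ 3 := by
      have hid : ((Real.sin a / ‖p‖) * (Real.sin b / ‖q‖) - t ^ 2) * (‖p‖ * ‖q‖)
          = Real.sin a * (Real.sin b - b) + b * (Real.sin a - a) := by
        have : ((Real.sin a / ‖p‖) * (Real.sin b / ‖q‖) - t ^ 2) * (‖p‖ * ‖q‖)
            = (Real.sin a / ‖p‖ * ‖p‖) * (Real.sin b / ‖q‖ * ‖q‖) - t ^ 2 * (‖p‖ * ‖q‖) := by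
          ring
        rw [this, hsap, hsbq, hadef, hbdef]; ring
      rw [hid]
      have htr := abs_add_le (Real.sin a * (Real.sin b - b)) (b * (Real.sin a - a))
      have hp1 : |Real.sin a * (Real.sin b - b)| ≤ a * (7 / 32 * b ^ 3) := by
        rw [abs_mul, abs_sub_comm]
        exact mul_le_mul hsa' (by rwa [abs_sub_comm]) (abs_nonneg _) ha0
      have hp2 : |b * (Real.sin a - a)| ≤ b * (7 / 32 * a ^ 3) := by
        rw [abs_mul, abs_of_nonneg hb0]
        exact mul_le_mul_of_nonneg_left hsa hb0
      have e1 : a * b ^ 3 ≤ t * t ^ 3 := mul_le_mul hat hb3 (by positivity) ht0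
      have e2 : b * a ^ 3 ≤ t * t ^ 3 := mul_le_mul hbt ha3 (by positivity) ht0
      have e3 : t * t ^ 3 = t ^ 4 := by ring
      linarith
    calc |((Real.sin a / ‖p‖) * (Real.sin b / ‖q‖) - t ^ 2) * ⟪p, q⟫|
        ≤ |(Real.sin a / ‖p‖) * (Real.sin b / ‖q‖) - t ^ 2| * (‖p‖ * ‖q‖) := by
          rw [abs_mul]; exact mul_le_mul_of_nonneg_left hpq (abs_nonneg _)
      _ = |((Real.sin a / ‖p‖) * (Real.sin b / ‖q‖) - t ^ 2) * (‖p‖ * ‖q‖)| := by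
          rw [abs_mul (_ - t^2), abs_of_nonneg (mul_nonneg hp0 hq0)]
      _ ≤ 7 / 16 * t ^ 3 := key
  have habs4 : ∀ w x y z : ℝ, |w + x + y + z| ≤ |w| + |x| + |y| + |z| := by
    intro w x y z
    calc |w + x + y + z| ≤ |w + x + y| + |z| := abs_add_le _ _
      _ ≤ |w| + |x| + |y| + |z| := by linarith [abs_add_three w x y]
  refine (habs4 _ _ _ _).trans ?_
  linarith [h1, h2, h3, h4]

/-- second-order Taylor approximation of `f` at a stationary point,
with explicit cubic error. -/
theorem stationary_taylor_bound {n r : ℕ} (hn : 0 < n) (hr : 0 < r)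
    (A : Matrix (Fin n) (Fin n) ℝ) (hA : A.IsSymm) (hdiag : ∀ i, A i i = 0)
    (σb : Conf n r) (hσb : inM σb) (hstat : stationary A σb)
    (u : Conf n r) (hu : tangent σb u) (hun : fnormSq u = 1)
    (t : ℝ) (ht0 : 0 ≤ t) (ht1 : t ≤ 1) :
    |fval A (geo σb u t) - fval A σb -
        t ^ 2 * ∑ i, (⟪u i, gvec A u i⟫ - ‖u i‖ ^ 2 * ‖gvec A σb i‖)|
      ≤ 5 * n * Anorm1 A / 2 * t ^ 3 := by
  classical
  -- row norms are at most 1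
  have hnormu : ∀ i, ‖u i‖ ≤ 1 := by
    intro i
    have h1 : ‖u i‖ ^ 2 ≤ 1 := by
      rw [← hun]
      exact Finset.single_le_sum (f := fun j => ‖u j‖ ^ 2)
        (fun j _ => sq_nonneg _) (Finset.mem_univ i)
    nlinarith [norm_nonneg (u i)]
  have hAsymm : ∀ i j, A i j = A j i := fun i j => (hA.apply i j).symm
  -- inner products against gvec
  have hginner : ∀ (τ : Conf n r) (w : Pt r) (i : Fin n),
      ⟪w, gvec A τ i⟫ = ∑ j, A i j * ⟪w, τ j⟫ := by
    intro τ w i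
    calc ⟪w, gvec A τ i⟫ = ∑ j ∈ univ.erase i, A i j * ⟪w, τ j⟫ := by
          simp only [gvec, inner_sum, real_inner_smul_right]
      _ = ∑ j, A i j * ⟪w, τ j⟫ := by
          rw [Finset.sum_erase_eq_sub (Finset.mem_univ i), hdiag i]
          simp
  -- stationarity facts
  have hgσ : ∀ i, gvec A σb i = ‖gvec A σb i‖ • σb i := by
    intro i
    obtain ⟨hne, heq⟩ := hstat i
    rw [heq, smul_smul, mul_inv_cancel₀ (norm_ne_zero_iff.mpr hne), one_smul]
  have hug : ∀ i, ⟪u i, gvec A σb i⟫ = 0 := by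
    intro i
    rw [hgσ i, real_inner_smul_right, hu i, mul_zero]
  have hσg : ∀ i, ⟪σb i, gvec A σb i⟫ = ‖gvec A σb i‖ := by
    intro i
    conv_lhs => rw [hgσ i]
    rw [real_inner_smul_right, real_inner_self_eq_norm_sq, hσb i]
    ring
  -- first-order sums vanish
  have hL1 : ∑ i, ∑ j, A i j * ⟪u i, σb j⟫ = 0 := by
    have h : ∀ i : Fin n, ∑ j, A i j * ⟪u i, σb j⟫ = 0 := fun i => by
      rw [← hginner σb (u i) i, hug i]
    calc ∑ i, ∑ j, A i j * ⟪u i, σb j⟫ = ∑ i : Fin n, (0:ℝ) :=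
          Finset.sum_congr rfl fun i _ => h i
      _ = 0 := Finset.sum_const_zero
  have hL2 : ∑ i, ∑ j, A i j * ⟪σb i, u j⟫ = 0 := by
    rw [Finset.sum_comm]
    have h : ∀ j : Fin n, ∑ i, A i j * ⟪σb i, u j⟫ = 0 := by
      intro j
      have : ∑ i, A i j * ⟪σb i, u j⟫ = ∑ i, A j i * ⟪u j, σb i⟫ :=
        Finset.sum_congr rfl fun i _ => by rw [hAsymm i j, real_inner_comm]
      rw [this, ← hginner σb (u j) j, hug j]
    calc ∑ j, ∑ i, A i j * ⟪σb i, u j⟫ = ∑ j : Fin n, (0:ℝ) :=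
          Finset.sum_congr rfl fun j _ => h j
      _ = 0 := Finset.sum_const_zero
  -- second-order sums
  have hQ1 : ∑ i, ∑ j, A i j * ⟪u i, u j⟫ = ∑ i, ⟪u i, gvec A u i⟫ :=
    Finset.sum_congr rfl fun i _ => (hginner u (u i) i).symm
  have hQ2 : ∑ i, ∑ j, A i j * (‖u i‖ ^ 2 * ⟪σb i, σb j⟫)
      = ∑ i, ‖u i‖ ^ 2 * ‖gvec A σb i‖ := by
    refine Finset.sum_congr rfl fun i _ => ?_
    calc ∑ j, A i j * (‖u i‖ ^ 2 * ⟪σb i, σb j⟫)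
        = ‖u i‖ ^ 2 * ∑ j, A i j * ⟪σb i, σb j⟫ := by
          rw [Finset.mul_sum]; exact Finset.sum_congr rfl fun j _ => by ring
      _ = ‖u i‖ ^ 2 * ‖gvec A σb i‖ := by rw [← hginner σb (σb i) i, hσg i]
  have hQ3 : ∑ i, ∑ j, A i j * (‖u j‖ ^ 2 * ⟪σb i, σb j⟫)
      = ∑ i, ‖u i‖ ^ 2 * ‖gvec A σb i‖ := by
    rw [Finset.sum_comm]
    refine Finset.sum_congr rfl fun j _ => ?_
    calc ∑ i, A i j * (‖u j‖ ^ 2 * ⟪σb i, σb j⟫)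
        = ‖u j‖ ^ 2 * ∑ i, A j i * ⟪σb j, σb i⟫ := by
          rw [Finset.mul_sum]
          exact Finset.sum_congr rfl fun i _ => by
            rw [hAsymm i j, real_inner_comm]; ring
      _ = ‖u j‖ ^ 2 * ‖gvec A σb j‖ := by rw [← hginner σb (σb j) j, hσg j]
  -- the remainder
  set D : Fin n → Fin n → ℝ := fun i j =>
    ⟪geo σb u t i, geo σb u t j⟫ - ⟪σb i, σb j⟫ - t * (⟪σb i, u j⟫ + ⟪u i, σb j⟫)
      - t ^ 2 * (⟪u i, u j⟫ - (‖u i‖ ^ 2 + ‖u j‖ ^ 2) / 2 * ⟪σb i, σb j⟫) with hD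
  have hDb : ∀ i j, |D i j| ≤ 5 / 2 * t ^ 3 := by
    intro i j
    have := Dbound ht0 ht1 (σb i) (σb j) (u i) (u j) (hσb i) (hσb j) (hnormu i) (hnormu j)
    simpa only [hD, geo] using this
  -- main algebraic identity
  have hmain : fval A (geo σb u t) - fval A σb
      - t ^ 2 * ∑ i, (⟪u i, gvec A u i⟫ - ‖u i‖ ^ 2 * ‖gvec A σb i‖)
      = ∑ i, ∑ j, A i j * D i j := by
    have hsum : ∑ i, (⟪u i, gvec A u i⟫ - ‖u i‖ ^ 2 * ‖gvec A σb i‖)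
        = (∑ i, ∑ j, A i j * ⟪u i, u j⟫)
          - ((∑ i, ∑ j, A i j * (‖u i‖ ^ 2 * ⟪σb i, σb j⟫))
            + (∑ i, ∑ j, A i j * (‖u j‖ ^ 2 * ⟪σb i, σb j⟫))) / 2 := by
      rw [Finset.sum_sub_distrib, hQ1, hQ2, hQ3]; ring
    have hdist : ∑ i, ∑ j, A i j * D i j
        = (∑ i, ∑ j, A i j * ⟪geo σb u t i, geo σb u t j⟫)
          - (∑ i, ∑ j, A i j * ⟪σb i, σb j⟫)
          - t * (∑ i, ∑ j, A i j * ⟪σb i, u j⟫)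
          - t * (∑ i, ∑ j, A i j * ⟪u i, σb j⟫)
          - t ^ 2 * (∑ i, ∑ j, A i j * ⟪u i, u j⟫)
          + t ^ 2 * (∑ i, ∑ j, A i j * (‖u i‖ ^ 2 * ⟪σb i, σb j⟫)) / 2
          + t ^ 2 * (∑ i, ∑ j, A i j * (‖u j‖ ^ 2 * ⟪σb i, σb j⟫)) / 2 := by
      calc ∑ i, ∑ j, A i j * D i j
          = ∑ i, ∑ j, ((A i j * ⟪geo σb u t i, geo σb u t j⟫)
            - (A i j * ⟪σb i, σb j⟫)
            - (t * (A i j * ⟪σb i, u j⟫))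
            - (t * (A i j * ⟪u i, σb j⟫))
            - (t ^ 2 * (A i j * ⟪u i, u j⟫))
            + (t ^ 2 * (A i j * (‖u i‖ ^ 2 * ⟪σb i, σb j⟫)) / 2)
            + (t ^ 2 * (A i j * (‖u j‖ ^ 2 * ⟪σb i, σb j⟫)) / 2)) :=
            Finset.sum_congr rfl fun i _ => Finset.sum_congr rfl fun j _ => by
              rw [hD]; ring
        _ = _ := by
            simp only [Finset.sum_add_distrib, Finset.sum_sub_distrib,
              ← Finset.mul_sum, ← Finset.sum_div]
    rw [hdist, hL1, hL2, hsum]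
    unfold fval
    ring
  rw [hmain]
  -- final estimate
  have habs : |∑ i, ∑ j, A i j * D i j| ≤ ∑ i, ∑ j, |A i j| * (5 / 2 * t ^ 3) := by
    calc |∑ i, ∑ j, A i j * D i j| ≤ ∑ i, |∑ j, A i j * D i j| :=
          Finset.abs_sum_le_sum_abs _ _
      _ ≤ ∑ i, ∑ j, |A i j * D i j| :=
          Finset.sum_le_sum fun i _ => Finset.abs_sum_le_sum_abs _ _
      _ ≤ ∑ i, ∑ j, |A i j| * (5 / 2 * t ^ 3) :=
          Finset.sum_le_sum fun i _ => Finset.sum_le_sum fun j _ => by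
            rw [abs_mul]
            exact mul_le_mul_of_nonneg_left (hDb i j) (abs_nonneg _)
  have hA1 : ∑ i, ∑ j, |A i j| ≤ (n : ℝ) * Anorm1 A := by
    rw [Finset.sum_comm]
    calc ∑ j, ∑ i, |A i j| ≤ ∑ _j : Fin n, Anorm1 A :=
          Finset.sum_le_sum fun j _ =>
            le_ciSup (f := fun j => ∑ i, |A i j|)
              (Set.Finite.bddAbove (Set.finite_range _)) j
      _ = (n : ℝ) * Anorm1 A := by
          rw [Finset.sum_const, Finset.card_univ, Fintype.card_fin, nsmul_eq_mul]
  have ht3 : (0 : ℝ) ≤ 5 / 2 * t ^ 3 := by positivity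
  calc |∑ i, ∑ j, A i j * D i j| ≤ ∑ i, ∑ j, |A i j| * (5 / 2 * t ^ 3) := habs
    _ = (∑ i, ∑ j, |A i j|) * (5 / 2 * t ^ 3) := by
        rw [Finset.sum_mul]
        exact Finset.sum_congr rfl fun i _ => by rw [Finset.sum_mul]
    _ ≤ (n : ℝ) * Anorm1 A * (5 / 2 * t ^ 3) :=
        mul_le_mul_of_nonneg_right hA1 ht3
    _ = 5 * n * Anorm1 A / 2 * t ^ 3 := by ring
end
end
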